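/- arXiv:math/0412208 — 5 statements merged into one kernel-verified Lean document; each statement's English description precedes it below -/
import Mathlib

section
/- Let n ≥ 2. The function F : 𝒳_n → ℝ defined by F(A) = √|det(adj A)| · ∫_{ℝⁿ_{≥0}} exp(−xᵀ adj(A) x) dx admits a continuous extension to the closure of 𝒳_n in ℝ^{n×n}. -/
open Matrix MeasureTheory Filter Topology
set_option maxHeartbeats 1000000

/-- The space of angle Gram matrices of spherical simplices: symmetric, unit diagonal,
positive definite. -/
def Xset (n : ℕ) : Set (Matrix (Fin n) (Fin n) ℝ) :=
  {A | A.IsSymm ∧ (∀ i, A i i = 1) ∧ A.PosDef}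

/-- `F(A) = √|det (adj A)| ∫_{ℝⁿ_{≥0}} exp (-xᵀ (adj A) x) dx`. -/
noncomputable def Ffun (n : ℕ) (A : Matrix (Fin n) (Fin n) ℝ) : ℝ :=
  Real.sqrt |A.adjugate.det| *
    ∫ x in {x : Fin n → ℝ | ∀ i, 0 ≤ x i}, Real.exp (-(x ⬝ᵥ A.adjugate *ᵥ x))

noncomputable section AuxDefs

variable {n : ℕ}
open scoped MatrixOrder

open scoped Classical in
/-- square root of a PSD matrix, extended junkly by 0. -/
noncomputable def msqrt (A : Matrix (Fin n) (Fin n) ℝ) : Matrix (Fin n) (Fin n) ℝ :=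
  if h : A.PosSemidef then CFC.sqrt A else 0

lemma msqrt_eq {A : Matrix (Fin n) (Fin n) ℝ} (hA : A.PosSemidef) :
    msqrt A = CFC.sqrt A := by
  rw [msqrt]; exact dif_pos hA

/-- set of PSD matrices with unit diagonal -/
def Pset (n : ℕ) : Set (Matrix (Fin n) (Fin n) ℝ) :=
  {A | A.PosSemidef ∧ ∀ i, A i i = 1}

/-- the candidate continuous extension -/
noncomputable def Gfun (n : ℕ) (A : Matrix (Fin n) (Fin n) ℝ) : ℝ :=
  ∫ y : Fin n → ℝ,
    Set.indicator {y : Fin n → ℝ | ∀ i, 0 ≤ (msqrt A *ᵥ y) i}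
      (fun y => Real.exp (-(y ⬝ᵥ y))) y

lemma msqrt_psd {A : Matrix (Fin n) (Fin n) ℝ} (hA : A.PosSemidef) :
    (msqrt A).PosSemidef := by
  rw [msqrt_eq hA]; exact (CFC.sqrt_nonneg A).posSemidef

lemma msqrt_mul_self {A : Matrix (Fin n) (Fin n) ℝ} (hA : A.PosSemidef) :
    msqrt A * msqrt A = A := by
  rw [msqrt_eq hA]; exact CFC.sqrt_mul_sqrt_self A hA.nonneg

lemma gauss_integrable : Integrable (fun x : Fin n → ℝ => Real.exp (-(x ⬝ᵥ x))) := by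
  have h : ∀ x : Fin n → ℝ, Real.exp (-(x ⬝ᵥ x)) = ∏ i, Real.exp (-1 * (x i) ^ 2) := by
    intro x
    rw [← Real.exp_sum]
    congr 1
    simp [dotProduct, sq, Finset.sum_neg_distrib]
  simp_rw [h]
  exact Integrable.fintype_prod (f := fun _ : Fin n => fun r : ℝ => Real.exp (-1 * r ^ 2))
    (fun _ => integrable_exp_neg_mul_sq one_pos)

lemma isClosed_psd : IsClosed {A : Matrix (Fin n) (Fin n) ℝ | A.PosSemidef} := by
  have h : {A : Matrix (Fin n) (Fin n) ℝ | A.PosSemidef}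
      = {A : Matrix (Fin n) (Fin n) ℝ | A.IsHermitian}
        ∩ ⋂ x : Fin n → ℝ, {A | 0 ≤ dotProduct (star x) (A *ᵥ x)} := by
    ext A
    simp only [Set.mem_setOf_eq, Set.mem_inter_iff, Set.mem_iInter, Matrix.posSemidef_iff_dotProduct_mulVec]
  rw [h]
  refine IsClosed.inter ?_ (isClosed_iInter fun x => ?_)
  · have h2 : {A : Matrix (Fin n) (Fin n) ℝ | A.IsHermitian}
        = {A : Matrix (Fin n) (Fin n) ℝ | Aᴴ = A} := rfl
    rw [h2]
    exact isClosed_eq (continuous_id.matrix_conjTranspose) continuous_id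
  · exact isClosed_le continuous_const
      ((continuous_const).dotProduct (continuous_id.matrix_mulVec continuous_const))

lemma isClosed_pset : IsClosed (Pset n) := by
  have h : Pset n = {A : Matrix (Fin n) (Fin n) ℝ | A.PosSemidef}
      ∩ ⋂ i : Fin n, {A | A i i = 1} := by
    ext A
    simp only [Pset, Set.mem_setOf_eq, Set.mem_inter_iff, Set.mem_iInter]
  rw [h]
  exact isClosed_psd.inter (isClosed_iInter fun i =>
    isClosed_eq (continuous_id.matrix_elem i i) continuous_const)

lemma closure_xset_subset : closure (Xset n) ⊆ Pset n :=
  closure_minimal (fun A hA => ⟨hA.2.2.posSemidef, hA.2.1⟩) isClosed_pset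

/-- sequential criterion for continuity within a set -/
lemma continuousWithinAt_of_seq {α : Type*} [TopologicalSpace α]
    [FirstCountableTopology α] {β : Type*} [TopologicalSpace β]
    {f : α → β} {S : Set α} {A : α}
    (h : ∀ u : ℕ → α, (∀ k, u k ∈ S) → Tendsto u atTop (𝓝 A) →
      Tendsto (fun k => f (u k)) atTop (𝓝 (f A))) :
    ContinuousWithinAt f S A := by
  rw [ContinuousWithinAt, Filter.tendsto_iff_seq_tendsto]
  intro x hx
  rw [tendsto_nhdsWithin_iff] at hx
  obtain ⟨h1, h2⟩ := hx
  obtain ⟨N, hN⟩ := eventually_atTop.mp h2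
  have key := h (fun k => x (k + N)) (fun k => hN _ (Nat.le_add_left N k))
    (h1.comp (tendsto_add_atTop_nat N))
  exact (tendsto_add_atTop_iff_nat (f := fun k => f (x k)) N).mp key

lemma sq_sum_row {B : Matrix (Fin n) (Fin n) ℝ} (hB : B.PosSemidef) (i : Fin n) :
    (B * B) i i = ∑ k, (B i k) ^ 2 := by
  rw [Matrix.mul_apply]
  congr 1
  ext k
  rw [sq]
  congr 1
  simpa using hB.1.apply i k

/-- entrywise bound on a PSD square root -/
lemma sqrt_entry_bound {A : Matrix (Fin n) (Fin n) ℝ} (hA : A.PosSemidef) (C : ℝ)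
    (hC : ∀ i, A i i ≤ C ^ 2) (hC0 : 0 ≤ C) : ∀ i j, msqrt A i j ∈ Set.Icc (-C) C := by
  intro i j
  have hBpsd := msqrt_psd hA
  have h1 : (msqrt A i j) ^ 2 ≤ C ^ 2 := by
    calc (msqrt A i j) ^ 2 ≤ ∑ k, (msqrt A i k) ^ 2 :=
          Finset.single_le_sum (f := fun k => (msqrt A i k) ^ 2)
            (fun k _ => sq_nonneg _) (Finset.mem_univ j)
      _ = (msqrt A * msqrt A) i i := (sq_sum_row hBpsd i).symm
      _ = A i i := by rw [msqrt_mul_self hA]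
      _ ≤ C ^ 2 := hC i
  constructor
  · nlinarith [sq_nonneg (msqrt A i j + C)]
  · nlinarith [sq_nonneg (msqrt A i j - C)]

instance : FirstCountableTopology (Matrix (Fin n) (Fin n) ℝ) :=
  inferInstanceAs (FirstCountableTopology (Fin n → Fin n → ℝ))

/-- continuity of the matrix square root on the PSD cone -/
lemma msqrt_continuousOn :
    ContinuousOn (msqrt (n := n)) {A : Matrix (Fin n) (Fin n) ℝ | A.PosSemidef} := by
  intro A hA
  apply continuousWithinAt_of_seq
  intro u hu hulim
  set C : ℝ := 1 + ∑ j, |A j j| with hCdef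
  have hsum0 : (0:ℝ) ≤ ∑ j, |A j j| := Finset.sum_nonneg fun j _ => abs_nonneg _
  have hC0 : (0:ℝ) ≤ C := by rw [hCdef]; linarith
  have hdiag : ∀ i : Fin n, Tendsto (fun k => u k i i) atTop (𝓝 (A i i)) :=
    fun i => ((continuous_id.matrix_elem i i).tendsto A).comp hulim
  have hev : ∀ᶠ k in atTop, ∀ i j, msqrt (u k) i j ∈ Set.Icc (-C) C := by
    have h1 : ∀ᶠ k in atTop, ∀ i, u k i i ≤ C ^ 2 := by
      rw [eventually_all]
      intro i
      have hlt : A i i < C ^ 2 := by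
        have h2 : A i i ≤ |A i i| := le_abs_self _
        have hsum : |A i i| ≤ ∑ j, |A j j| :=
          Finset.single_le_sum (f := fun j => |A j j|) (fun j _ => abs_nonneg _) (Finset.mem_univ i)
        nlinarith
      exact (hdiag i).eventually_le_const hlt
    filter_upwards [h1] with k hk
    exact sqrt_entry_bound (hu k) C hk hC0
  obtain ⟨N, hN⟩ := eventually_atTop.mp hev
  have hKcomp : IsCompact {B : Matrix (Fin n) (Fin n) ℝ | ∀ i j, B i j ∈ Set.Icc (-C) C} := by
    have heq : {B : Matrix (Fin n) (Fin n) ℝ | ∀ i j, B i j ∈ Set.Icc (-C) C}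
        = Set.univ.pi (fun _ : Fin n => Set.univ.pi fun _ : Fin n => Set.Icc (-C) C) := by
      ext B
      constructor
      · intro h i _ j _ ; exact h i j
      · intro h i j ; exact h i (Set.mem_univ i) j (Set.mem_univ j)
    rw [heq]
    exact isCompact_univ_pi fun _ => isCompact_univ_pi fun _ => isCompact_Icc
  apply tendsto_of_subseq_tendsto
  intro ns hns
  obtain ⟨N', hN'⟩ := eventually_atTop.mp (hns.eventually_ge_atTop N)
  obtain ⟨L, _, φ, hφmono, hφtend⟩ := hKcomp.tendsto_subseq
    (x := fun m => msqrt (u (ns (m + N'))))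
    (fun m => hN _ (hN' _ (Nat.le_add_left N' m)))
  have hLpsd : L.PosSemidef :=
    isClosed_psd.mem_of_tendsto hφtend (Filter.Eventually.of_forall fun m => msqrt_psd (hu _))
  have h2 : Tendsto (fun m => u (ns (φ m + N'))) atTop (𝓝 A) :=
    hulim.comp (hns.comp ((tendsto_add_atTop_nat N').comp hφmono.tendsto_atTop))
  have hmul : Tendsto
      (fun m => msqrt (u (ns (φ m + N'))) * msqrt (u (ns (φ m + N')))) atTop (𝓝 (L * L)) := by
    have hc : Continuous (fun p : Matrix (Fin n) (Fin n) ℝ × Matrix (Fin n) (Fin n) ℝ =>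
        p.1 * p.2) := (continuous_fst.matrix_mul continuous_snd)
    exact (hc.tendsto (L, L)).comp (hφtend.prodMk_nhds hφtend)
  have heqm : (fun m => msqrt (u (ns (φ m + N'))) * msqrt (u (ns (φ m + N'))))
      = fun m => u (ns (φ m + N')) := funext fun m => msqrt_mul_self (hu _)
  rw [heqm] at hmul
  have hsq : L ^ 2 = A := by rw [pow_two]; exact tendsto_nhds_unique hmul h2
  have hLA : L = msqrt A := by rw [msqrt_eq hA]; exact (CFC.sqrt_unique (by rw [← pow_two]; exact hsq) hLpsd.nonneg).symm
  exact ⟨fun m => φ m + N', hLA ▸ hφtend⟩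

lemma cone_isClosed (B : Matrix (Fin n) (Fin n) ℝ) :
    IsClosed {y : Fin n → ℝ | ∀ i, 0 ≤ (B *ᵥ y) i} := by
  have h : {y : Fin n → ℝ | ∀ i, 0 ≤ (B *ᵥ y) i} = ⋂ i, {y | 0 ≤ (B *ᵥ y) i} := by
    ext y; simp
  rw [h]
  exact isClosed_iInter fun i => isClosed_le continuous_const
    ((continuous_apply i).comp (continuous_const.matrix_mulVec continuous_id))

lemma gfun_continuousOn : ContinuousOn (Gfun n) (Pset n) := by
  intro A hA
  apply continuousWithinAt_of_seq
  intro u hu hulim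
  have husub : Tendsto u atTop (𝓝[{A : Matrix (Fin n) (Fin n) ℝ | A.PosSemidef}] A) :=
    tendsto_nhdsWithin_iff.mpr ⟨hulim, .of_forall fun k => (hu k).1⟩
  have hB : Tendsto (fun k => msqrt (u k)) atTop (𝓝 (msqrt A)) :=
    Tendsto.comp (msqrt_continuousOn A hA.1) husub
  set B := msqrt A with hBdef
  have hnull : volume (⋃ i, {y : Fin n → ℝ | (B *ᵥ y) i = 0}) = 0 := by
    refine measure_iUnion_null fun i => ?_
    have hrow : ∃ v : Fin n → ℝ, (B *ᵥ v) i ≠ 0 := by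
      refine ⟨fun j => B i j, ?_⟩
      have h1 : (B *ᵥ fun j => B i j) i = ∑ k, (B i k) ^ 2 := by
        simp [Matrix.mulVec, dotProduct, sq]
      rw [h1]
      have h2 : ∑ k, (B i k) ^ 2 = A i i := by
        rw [← sq_sum_row (msqrt_psd hA.1) i, msqrt_mul_self hA.1]
      rw [h2, hA.2 i]
      exact one_ne_zero
    obtain ⟨v, hv⟩ := hrow
    have hker : {y : Fin n → ℝ | (B *ᵥ y) i = 0}
        = (LinearMap.ker ((LinearMap.proj i).comp (Matrix.mulVecLin B)) : Set (Fin n → ℝ)) := by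
      ext y
      simp only [Set.mem_setOf_eq, SetLike.mem_coe, LinearMap.mem_ker, LinearMap.comp_apply,
        LinearMap.proj_apply]
      rfl
    rw [hker]
    refine Measure.addHaar_submodule volume _ fun htop => hv ?_
    exact Submodule.eq_top_iff'.mp htop v
  unfold Gfun
  refine tendsto_integral_of_dominated_convergence (fun y => Real.exp (-(y ⬝ᵥ y)))
    (fun k => ?_) gauss_integrable (fun k => Filter.Eventually.of_forall fun y => ?_) ?_
  · exact ((Real.continuous_exp.comp
      (continuous_neg.comp (continuous_id.dotProduct continuous_id))).aestronglyMeasurable).indicator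
      (cone_isClosed _).measurableSet
  · rw [Set.indicator_apply]
    split_ifs
    · rw [Real.norm_eq_abs, abs_of_pos (Real.exp_pos _)]
    · simpa using (Real.exp_pos (-(y ⬝ᵥ y))).le
  · have hae : ∀ᵐ y : Fin n → ℝ, y ∉ ⋃ i, {y : Fin n → ℝ | (B *ᵥ y) i = 0} := by
      exact measure_eq_zero_iff_ae_notMem.mp hnull
    filter_upwards [hae] with y hy
    have hyne : ∀ i, (B *ᵥ y) i ≠ 0 := by
      intro i hi
      exact hy (Set.mem_iUnion.mpr ⟨i, hi⟩)
    have hconv : ∀ i, Tendsto (fun k => (msqrt (u k) *ᵥ y) i) atTop (𝓝 ((B *ᵥ y) i)) := by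
      intro i
      have hc : Continuous fun M : Matrix (Fin n) (Fin n) ℝ => (M *ᵥ y) i :=
        (continuous_apply i).comp (continuous_id.matrix_mulVec continuous_const)
      exact (hc.tendsto B).comp hB
    by_cases hpos : ∀ i, 0 < (B *ᵥ y) i
    · have hevk : ∀ᶠ k in atTop, ∀ i, 0 ≤ (msqrt (u k) *ᵥ y) i :=
        eventually_all.mpr fun i => ((hconv i).eventually_const_lt (hpos i)).mono
          fun k hk => hk.le
      have heq : ∀ᶠ k in atTop,
          Set.indicator {y : Fin n → ℝ | ∀ i, 0 ≤ (msqrt (u k) *ᵥ y) i}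
            (fun y => Real.exp (-(y ⬝ᵥ y))) y
          = Set.indicator {y : Fin n → ℝ | ∀ i, 0 ≤ (B *ᵥ y) i}
            (fun y => Real.exp (-(y ⬝ᵥ y))) y := by
        filter_upwards [hevk] with k hk
        rw [Set.indicator_of_mem (s := {y : Fin n → ℝ | ∀ i, 0 ≤ (msqrt (u k) *ᵥ y) i}) hk,
          Set.indicator_of_mem (s := {y : Fin n → ℝ | ∀ i, 0 ≤ (B *ᵥ y) i})
            (fun i => (hpos i).le)]
      exact Tendsto.congr' (heq.mono fun k hk => hk.symm) tendsto_const_nhds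
    · push_neg at hpos
      obtain ⟨i, hile⟩ := hpos
      have hlt : (B *ᵥ y) i < 0 := lt_of_le_of_ne hile (hyne i)
      have hevk : ∀ᶠ k in atTop, (msqrt (u k) *ᵥ y) i < 0 :=
        (hconv i).eventually_lt_const hlt
      have heq : ∀ᶠ k in atTop,
          Set.indicator {y : Fin n → ℝ | ∀ i, 0 ≤ (msqrt (u k) *ᵥ y) i}
            (fun y => Real.exp (-(y ⬝ᵥ y))) y
          = Set.indicator {y : Fin n → ℝ | ∀ i, 0 ≤ (B *ᵥ y) i}
            (fun y => Real.exp (-(y ⬝ᵥ y))) y := by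
        filter_upwards [hevk] with k hk
        rw [Set.indicator_of_notMem (s := {y : Fin n → ℝ | ∀ i, 0 ≤ (msqrt (u k) *ᵥ y) i})
            (fun hmem => absurd (hmem i) (not_le.mpr hk)),
          Set.indicator_of_notMem (s := {y : Fin n → ℝ | ∀ i, 0 ≤ (B *ᵥ y) i})
            (fun hmem => absurd (hmem i) (not_le.mpr hlt))]
      exact Tendsto.congr' (heq.mono fun k hk => hk.symm) tendsto_const_nhds

lemma sqrt_pow' {d : ℝ} (hd : 0 ≤ d) (m : ℕ) : Real.sqrt (d ^ m) = (Real.sqrt d) ^ m := by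
  induction m with
  | zero => simp
  | succ k ih => rw [pow_succ, pow_succ, Real.sqrt_mul (pow_nonneg hd k), ih]

lemma gfun_eq_ffun (hn : 1 ≤ n) {A : Matrix (Fin n) (Fin n) ℝ} (hA : A ∈ Xset n) : Gfun n A = Ffun n A := by
  classical
  obtain ⟨hsymm, hdiag, hpd⟩ := hA
  have hA1 : A.PosSemidef := hpd.posSemidef
  set B := msqrt A with hBdef
  have hBpsd : B.PosSemidef := msqrt_psd hA1
  have hBB : B * B = A := msqrt_mul_self hA1
  set d : ℝ := A.det with hddef
  have hd : 0 < d := hpd.det_pos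
  have hdetB2 : B.det * B.det = d := by rw [← Matrix.det_mul, hBB]
  have hdetBabs : |B.det| = Real.sqrt d := by
    rw [← Real.sqrt_sq_eq_abs, sq, hdetB2]
  have hsd : 0 < Real.sqrt d := Real.sqrt_pos.mpr hd
  have hdetB : IsUnit B.det := by
    refine isUnit_iff_ne_zero.mpr fun h => ?_
    rw [h, abs_zero] at hdetBabs
    exact hsd.ne hdetBabs
  set c : ℝ := (Real.sqrt d)⁻¹ with hcdef
  have hc : 0 < c := inv_pos.mpr hsd
  set T : Matrix (Fin n) (Fin n) ℝ := c • B with hTdef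
  set M : Matrix (Fin n) (Fin n) ℝ := A.adjugate with hMdef
  -- key algebraic identity : T * M * T = 1
  have hBM : B * M = d • B⁻¹ := by
    have h1 : B * (B * M) = d • 1 := by
      rw [← mul_assoc, hBB, hMdef, Matrix.mul_adjugate]
    calc B * M = (B⁻¹ * B) * (B * M) := by rw [Matrix.nonsing_inv_mul B hdetB, one_mul]
      _ = B⁻¹ * (B * (B * M)) := by rw [mul_assoc]
      _ = B⁻¹ * (d • 1) := by rw [h1]
      _ = d • B⁻¹ := by rw [Matrix.mul_smul, mul_one]
  have hTMT : T * M * T = 1 := by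
    have h2 : B * M * B = d • 1 := by
      rw [hBM, Matrix.smul_mul, Matrix.nonsing_inv_mul B hdetB]
    have h3 : T * M * T = (c * c) • (B * M * B) := by
      rw [hTdef]
      rw [Matrix.smul_mul, Matrix.smul_mul, Matrix.mul_smul, smul_smul]
    rw [h3, h2, smul_smul, mul_assoc, hcdef]
    rw [← Real.sqrt_mul_self hd.le]
    field_simp
    rw [Real.sqrt_sq hd.le, Real.sq_sqrt hd.le, div_self hd.ne', one_smul]
  -- quadratic form identity
  have hquad : ∀ y : Fin n → ℝ, (T *ᵥ y) ⬝ᵥ M *ᵥ (T *ᵥ y) = y ⬝ᵥ y := by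
    intro y
    have hTsymm : Tᵀ = T := by
      rw [hTdef, Matrix.transpose_smul]
      congr 1
      exact hBpsd.1
    have hTv : y ᵥ* T = T *ᵥ y := by
      conv_rhs => rw [← hTsymm]
      rw [Matrix.mulVec_transpose]
    rw [Matrix.mulVec_mulVec, Matrix.dotProduct_mulVec, ← hTv, Matrix.vecMul_vecMul,
      ← mul_assoc, hTMT, Matrix.vecMul_one]
  -- cone identity
  have hcone : ∀ y : Fin n → ℝ, (∀ i, 0 ≤ (B *ᵥ y) i) ↔ (∀ i, 0 ≤ (T *ᵥ y) i) := by
    intro y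
    have h4 : T *ᵥ y = c • (B *ᵥ y) := by rw [hTdef, Matrix.smul_mulVec]
    rw [h4]
    exact forall_congr' fun i => by
      simp only [Pi.smul_apply, smul_eq_mul]
      constructor
      · intro h; positivity
      · intro h; nlinarith
  -- determinant computation
  have hdetT : T.det = c ^ n * B.det := by
    rw [hTdef, Matrix.det_smul, Fintype.card_fin]
  have hdetTne : T.det ≠ 0 := by
    rw [hdetT]
    exact mul_ne_zero (pow_ne_zero _ hc.ne') (isUnit_iff_ne_zero.mp hdetB)
  have habsdetT : |T.det|⁻¹ = Real.sqrt |M.det| := by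
    rw [hdetT, abs_mul, abs_pow, abs_of_pos hc, hdetBabs]
    rw [hMdef, Matrix.det_adjugate, Fintype.card_fin, abs_of_nonneg (pow_nonneg hd.le _)]
    rw [sqrt_pow' hd.le]
    rw [hcdef, inv_pow]
    cases n with
    | zero => omega
    | succ m =>
      rw [Nat.succ_sub_one, pow_succ]
      field_simp
  -- the positive orthant
  set S : Set (Fin n → ℝ) := {x : Fin n → ℝ | ∀ i, 0 ≤ x i} with hSdef
  have hSmeas : MeasurableSet S := by
    have h6 : {x : Fin n → ℝ | ∀ i, 0 ≤ x i} = ⋂ i, {x : Fin n → ℝ | 0 ≤ x i} := by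
      ext x; simp
    have h7 : IsClosed {x : Fin n → ℝ | ∀ i, 0 ≤ x i} := by
      rw [h6]
      exact isClosed_iInter fun i => isClosed_le continuous_const (continuous_apply i)
    exact h7.measurableSet
  set g : (Fin n → ℝ) → ℝ := S.indicator (fun x => Real.exp (-(x ⬝ᵥ M *ᵥ x))) with hgdef
  have hgsm : StronglyMeasurable g :=
    (Real.continuous_exp.comp
      (continuous_neg.comp (continuous_id.dotProduct
        (continuous_const.matrix_mulVec continuous_id)))).stronglyMeasurable.indicator hSmeas
  -- pointwise identity
  have hpt : ∀ y : Fin n → ℝ,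
      Set.indicator {y : Fin n → ℝ | ∀ i, 0 ≤ (B *ᵥ y) i}
        (fun y => Real.exp (-(y ⬝ᵥ y))) y = g (T *ᵥ y) := by
    intro y
    by_cases hy : ∀ i, 0 ≤ (B *ᵥ y) i
    · rw [Set.indicator_of_mem (s := {y : Fin n → ℝ | ∀ i, 0 ≤ (B *ᵥ y) i}) hy,
        hgdef, Set.indicator_of_mem (s := S) ((hcone y).mp hy), hquad y]
    · rw [Set.indicator_of_notMem (s := {y : Fin n → ℝ | ∀ i, 0 ≤ (B *ᵥ y) i}) hy,
        hgdef, Set.indicator_of_notMem (s := S) (fun hmem => hy ((hcone y).mpr hmem))]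
  -- change of variables
  have hmap : Measure.map (Matrix.toLin' T) volume
      = ENNReal.ofReal |T.det|⁻¹ • volume := by
    have := Real.map_matrix_volume_pi_eq_smul_volume_pi (M := T) hdetTne
    rw [this, abs_inv]
  have hchange : ∫ y : Fin n → ℝ, g (T *ᵥ y) = |T.det|⁻¹ * ∫ x : Fin n → ℝ, g x := by
    have hφ : AEMeasurable (Matrix.toLin' T) volume :=
      ((Matrix.toLin' T).continuous_of_finiteDimensional).measurable.aemeasurable
    have h5 : ∫ y : Fin n → ℝ, g (T *ᵥ y)
        = ∫ x, g x ∂(Measure.map (Matrix.toLin' T) volume) := by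
      rw [integral_map hφ (hgsm.aestronglyMeasurable)]
      simp_rw [Matrix.toLin'_apply]
    rw [h5, hmap, integral_smul_measure, ENNReal.toReal_ofReal (by positivity), smul_eq_mul]
  -- conclusion
  rw [Gfun, Ffun]
  simp_rw [← hBdef, hpt]
  rw [hchange, habsdetT, hgdef, integral_indicator hSmeas]

end AuxDefs

/-- The function `F` on `𝒳_n` extends continuously to the closure of `𝒳_n`
in the space of n×n matrices. -/
theorem stmt1 (n : ℕ) (hn : 2 ≤ n) :
    ∃ G : Matrix (Fin n) (Fin n) ℝ → ℝ,
      ContinuousOn G (closure (Xset n)) ∧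
      ∀ A ∈ Xset n, G A = Ffun n A := by
  exact ⟨Gfun n, gfun_continuousOn.mono closure_xset_subset,
    fun A hA => gfun_eq_ffun (by omega) hA⟩
end

section
/- Let B be a real symmetric (n+1)×(n+1) matrix such that every principal n×n submatrix of B (obtained by deleting the i-th row and i-th column, for each i) is positive definite, and such that det B ≤ 0. Then no entry of the adjugate matrix adj(B) is zero. -/
open Matrix

/-- If `B` is a real symmetric (n+1)×(n+1) matrix all of whose principal n×n submatrices
are positive definite and `det B ≤ 0`, then no entry of `adj(B)` is zero. -/
theorem stmt9 (n : ℕ) (B : Matrix (Fin (n + 1)) (Fin (n + 1)) ℝ) (hB : B.IsSymm)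
    (hprin : ∀ i : Fin (n + 1),
      Matrix.PosDef (B.submatrix (fun j : {j : Fin (n + 1) // j ≠ i} => (j : Fin (n + 1)))
        (fun j : {j : Fin (n + 1) // j ≠ i} => (j : Fin (n + 1)))))
    (hdet : B.det ≤ 0) :
    ∀ i j, B.adjugate i j ≠ 0 := by
  -- Step 1: diagonal entries of the adjugate are the principal minors, hence positive.
  have hdiag : ∀ i : Fin (n + 1), 0 < B.adjugate i i := by
    intro i
    have h1 : B.adjugate i i = det (B.submatrix i.succAbove i.succAbove) := by
      rw [Matrix.adjugate_fin_succ_eq_det_submatrix]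
      have : ((-1 : ℝ)) ^ ((i : ℕ) + (i : ℕ)) = 1 := by
        rw [← two_mul, pow_mul]
        norm_num
      rw [this, one_mul]
    have h2 : B.submatrix i.succAbove i.succAbove
        = (B.submatrix (fun j : {j : Fin (n + 1) // j ≠ i} => (j : Fin (n + 1)))
            (fun j : {j : Fin (n + 1) // j ≠ i} => (j : Fin (n + 1)))).submatrix
          (finSuccAboveEquiv i) (finSuccAboveEquiv i) := by
      ext a b; rfl
    rw [h1, h2, Matrix.det_submatrix_equiv_self]
    exact (hprin i).det_pos
  intro i j
  by_cases hij : i = j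
  · subst hij; exact (hdiag i).ne'
  intro h0
  -- y is the j-th column of the adjugate
  set y : Fin (n + 1) → ℝ := fun k => B.adjugate k j with hy
  have hyi : y i = 0 := h0
  have hyj : 0 < y j := hdiag j
  -- B *ᵥ y = det B • e_j
  have hBy : ∀ k, (B *ᵥ y) k = B.det * (if k = j then 1 else 0) := by
    intro k
    have : (B *ᵥ y) k = (B * B.adjugate) k j := by
      simp [Matrix.mulVec, Matrix.mul_apply, dotProduct, hy]
    rw [this, Matrix.mul_adjugate]
    simp [Matrix.one_apply]
  -- summing over the subtype {k // k ≠ i}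
  have hsum : ∀ f : Fin (n + 1) → ℝ, f i = 0 →
      ∑ k : {k : Fin (n + 1) // k ≠ i}, f (k : Fin (n + 1)) = ∑ k, f k := by
    intro f hf
    have h := Finset.sum_subtype (p := fun k => k ≠ i) (F := inferInstance) (Finset.univ.erase i)
      (fun x => by simp) f
    rw [← h, ← Finset.sum_erase_add Finset.univ f (Finset.mem_univ i), hf, add_zero]
  -- restrict y to the subtype
  set z : {k : Fin (n + 1) // k ≠ i} → ℝ := fun k => y (k : Fin (n + 1)) with hz
  have hzne : z ≠ 0 := by
    intro hzero
    have : z ⟨j, fun h => hij h.symm⟩ = 0 := by rw [hzero]; rfl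
    rw [hz] at this
    simp only at this
    exact hyj.ne' this
  have hpos := (hprin i).dotProduct_mulVec_pos hzne
  -- identify the quadratic form of the submatrix with that of B
  have hquad : star z ⬝ᵥ
      ((B.submatrix (fun j : {j : Fin (n + 1) // j ≠ i} => (j : Fin (n + 1)))
        (fun j : {j : Fin (n + 1) // j ≠ i} => (j : Fin (n + 1)))) *ᵥ z)
      = y ⬝ᵥ (B *ᵥ y) := by
    have hmv : ∀ k : {k : Fin (n + 1) // k ≠ i},
        ((B.submatrix (fun j : {j : Fin (n + 1) // j ≠ i} => (j : Fin (n + 1)))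
          (fun j : {j : Fin (n + 1) // j ≠ i} => (j : Fin (n + 1)))) *ᵥ z) k
        = (B *ᵥ y) (k : Fin (n + 1)) := by
      intro k
      simp only [Matrix.mulVec, dotProduct, Matrix.submatrix_apply, hz]
      exact hsum (fun l => B (k : Fin (n + 1)) l * y l) (by simp [hyi])
    calc star z ⬝ᵥ
        ((B.submatrix (fun j : {j : Fin (n + 1) // j ≠ i} => (j : Fin (n + 1)))
          (fun j : {j : Fin (n + 1) // j ≠ i} => (j : Fin (n + 1)))) *ᵥ z)
        = ∑ k : {k : Fin (n + 1) // k ≠ i}, y (k : Fin (n + 1)) * (B *ᵥ y) (k : Fin (n + 1)) := by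
          simp only [dotProduct, star_trivial, hz]
          exact Finset.sum_congr rfl (fun k _ => by rw [hmv k])
      _ = ∑ k, y k * (B *ᵥ y) k :=
          hsum (fun k => y k * (B *ᵥ y) k) (by simp [hyi])
      _ = y ⬝ᵥ (B *ᵥ y) := rfl
  -- but yᵀ B y = det B * adj B j j ≤ 0, contradiction
  have hval : y ⬝ᵥ (B *ᵥ y) = B.det * B.adjugate j j := by
    simp only [dotProduct]
    rw [Finset.sum_congr rfl (fun k _ => by rw [hBy k])]
    simp [hy, mul_comm]
  rw [hquad, hval] at hpos
  nlinarith [hdiag j, hpos, hdet]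
end

section
/- Let n ≥ 2 and let A ∈ 𝒴_n. Then A has exactly one negative eigenvalue −λ (with λ > 0) and it is a simple eigenvalue; for every t ∈ [0, λ] all entries of adj(A + t·Id) are positive; and every eigenvector of A with eigenvalue −λ has all of its entries nonzero and of the same sign. -/
open Matrix

/-- The space of angle Gram matrices of hyperbolic simplices: symmetric, unit diagonal,
all entries of the adjugate positive, negative determinant, and all principal
(n-1)×(n-1) submatrices positive definite. -/
def Yset (n : ℕ) : Set (Matrix (Fin n) (Fin n) ℝ) :=
  {A | A.IsSymm ∧ (∀ i, A i i = 1) ∧ (∀ i j, 0 < A.adjugate i j) ∧ A.det < 0 ∧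
    ∀ i : Fin n,
      Matrix.PosDef (A.submatrix (fun j : {j : Fin n // j ≠ i} => (j : Fin n))
        (fun j : {j : Fin n // j ≠ i} => (j : Fin n)))}

namespace Stmt11Aux

open Matrix Polynomial Finset


variable {n : ℕ}

lemma sum_ne (i : Fin n) (f : Fin n → ℝ) (hf : f i = 0) :
    (∑ j : {j : Fin n // j ≠ i}, f (j : Fin n)) = ∑ j, f j := by
  have h1 : ∑ j ∈ Finset.univ.erase i, f j = ∑ j : {j : Fin n // j ≠ i}, f (j : Fin n) :=
    Finset.sum_subtype _ (fun x => by simp) f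
  rw [← h1, Finset.sum_erase _ hf]

lemma dot_submatrix (M : Matrix (Fin n) (Fin n) ℝ) (i : Fin n) (w : Fin n → ℝ)
    (hw : w i = 0) :
    (fun j : {j : Fin n // j ≠ i} => w (j : Fin n)) ⬝ᵥ
      ((M.submatrix (fun j : {j : Fin n // j ≠ i} => (j : Fin n))
        (fun j : {j : Fin n // j ≠ i} => (j : Fin n))) *ᵥ
        (fun j : {j : Fin n // j ≠ i} => w (j : Fin n))) = w ⬝ᵥ (M *ᵥ w) := by
  simp only [dotProduct, Matrix.mulVec, Matrix.submatrix_apply]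
  have inner : ∀ a : Fin n,
      (∑ k : {j : Fin n // j ≠ i}, M a (k : Fin n) * w (k : Fin n)) = ∑ k, M a k * w k :=
    fun a => sum_ne i (fun k => M a k * w k) (by simp [hw])
  have outer := sum_ne i (fun a => w a * ∑ k, M a k * w k) (by simp [hw])
  rw [← outer]
  exact Finset.sum_congr rfl fun x _ => by rw [inner]

lemma adjugate_diag (M : Matrix (Fin n) (Fin n) ℝ) (i : Fin n) :
    M.adjugate i i =
      (M.submatrix (fun j : {j : Fin n // j ≠ i} => (j : Fin n))
        (fun j : {j : Fin n // j ≠ i} => (j : Fin n))).det := by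
  rw [Matrix.adjugate_apply]
  let e : ({j : Fin n // j ≠ i} ⊕ Unit) ≃ Fin n :=
    { toFun := Sum.elim (fun j => (j : Fin n)) (fun _ => i)
      invFun := fun j => if h : j = i then Sum.inr () else Sum.inl ⟨j, h⟩
      left_inv := by
        rintro (⟨j, hj⟩ | ⟨⟩)
        · exact dif_neg hj
        · simp
      right_inv := fun j => by by_cases h : j = i <;> simp [h] }
  rw [← Matrix.det_submatrix_equiv_self e]
  have hb : (M.updateRow i (Pi.single i 1)).submatrix e e =
      Matrix.fromBlocks
        (M.submatrix (fun j : {j : Fin n // j ≠ i} => (j : Fin n))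
          (fun j : {j : Fin n // j ≠ i} => (j : Fin n)))
        (Matrix.of fun (j : {j : Fin n // j ≠ i}) (_ : Unit) => M (j : Fin n) i) 0 1 := by
    ext a b
    rcases a with a | a
    · rcases b with b | b
      · simp [e, Matrix.updateRow_apply, a.2, Pi.single_apply]
      · simp [e, Matrix.updateRow_apply, a.2, Pi.single_apply]
    · rcases b with b | b
      · simp [e, Matrix.updateRow_apply, Pi.single_apply, (b.2 : (b : Fin n) ≠ i), Ne.symm b.2]
      · simp [e, Matrix.updateRow_apply, Pi.single_apply, Matrix.one_apply]
  rw [hb, Matrix.det_fromBlocks_zero₂₁]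
  simp



variable {n : ℕ}

lemma expand_vec {u : Fin n → Fin n → ℝ}
    (hcomp : ∀ i j, (∑ k, u k i * u k j) = if i = j then (1:ℝ) else 0)
    (x : Fin n → ℝ) (i : Fin n) :
    x i = ∑ k, (u k ⬝ᵥ x) * u k i := by
  have : ∀ k, (u k ⬝ᵥ x) * u k i = ∑ j, (u k i * u k j) * x j := by
    intro k
    rw [dotProduct, Finset.sum_mul]
    exact Finset.sum_congr rfl fun j _ => by ring
  simp_rw [this]
  rw [Finset.sum_comm]
  simp_rw [← Finset.sum_mul, hcomp]
  simp [Finset.sum_ite_eq]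

lemma expand_quad {u : Fin n → Fin n → ℝ}
    (hcomp : ∀ i j, (∑ k, u k i * u k j) = if i = j then (1:ℝ) else 0)
    {C : Matrix (Fin n) (Fin n) ℝ} {c : Fin n → ℝ}
    (hC : ∀ k, C *ᵥ u k = c k • u k) (x : Fin n → ℝ) :
    x ⬝ᵥ (C *ᵥ x) = ∑ k, c k * (u k ⬝ᵥ x) ^ 2 := by
  have hCx : ∀ i, (C *ᵥ x) i = ∑ k, c k * (u k ⬝ᵥ x) * u k i := by
    intro i
    have h1 : (C *ᵥ x) i = ∑ j, C i j * x j := rfl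
    rw [h1]
    have h2 : ∀ j, C i j * x j = ∑ k, C i j * ((u k ⬝ᵥ x) * u k j) := by
      intro j
      rw [← Finset.mul_sum, ← expand_vec hcomp x j]
    simp_rw [h2]
    rw [Finset.sum_comm]
    have h3 : ∀ k, (∑ j, C i j * ((u k ⬝ᵥ x) * u k j)) = c k * (u k ⬝ᵥ x) * u k i := by
      intro k
      have e1 : (∑ j, C i j * ((u k ⬝ᵥ x) * u k j)) = (u k ⬝ᵥ x) * ∑ j, C i j * u k j := by
        rw [Finset.mul_sum]
        exact Finset.sum_congr rfl fun j _ => by ring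
      rw [e1, show (∑ j, C i j * u k j) = (C *ᵥ u k) i from rfl, hC k]
      simp only [Pi.smul_apply, smul_eq_mul]
      ring
    exact Finset.sum_congr rfl fun k _ => h3 k
  have h4 : x ⬝ᵥ (C *ᵥ x) = ∑ i, x i * ∑ k, c k * (u k ⬝ᵥ x) * u k i := by
    rw [dotProduct]
    exact Finset.sum_congr rfl fun i _ => by rw [hCx i]
  rw [h4]
  simp_rw [Finset.mul_sum]
  rw [Finset.sum_comm]
  refine Finset.sum_congr rfl fun k _ => ?_
  have : ∀ i, x i * (c k * (u k ⬝ᵥ x) * u k i) = (c k * (u k ⬝ᵥ x)) * (u k i * x i) := by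
    intro i; ring
  simp_rw [this]
  rw [← Finset.mul_sum]
  have : (∑ i, u k i * x i) = u k ⬝ᵥ x := rfl
  rw [this]; ring

lemma two_quad {u : Fin n → Fin n → ℝ}
    (horm : ∀ k l, u k ⬝ᵥ u l = if k = l then (1:ℝ) else 0)
    {C : Matrix (Fin n) (Fin n) ℝ} {c : Fin n → ℝ}
    (hC : ∀ k, C *ᵥ u k = c k • u k)
    {k l : Fin n} (hkl : k ≠ l) (a b : ℝ) :
    (a • u k + b • u l) ⬝ᵥ (C *ᵥ (a • u k + b • u l)) = c k * a ^ 2 + c l * b ^ 2 := by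
  simp only [Matrix.mulVec_add, Matrix.mulVec_smul, hC, dotProduct_add,
    add_dotProduct, smul_dotProduct, dotProduct_smul, smul_eq_mul,
    horm, if_pos rfl, if_neg hkl, if_neg (Ne.symm hkl)]
  norm_num
  ring

lemma kernel_col {u : Fin n → Fin n → ℝ}
    (hcomp : ∀ i j, (∑ k, u k i * u k j) = if i = j then (1:ℝ) else 0)
    {M : Matrix (Fin n) (Fin n) ℝ} (hMs : Mᵀ = M) {ν : Fin n → ℝ}
    (hM : ∀ k, M *ᵥ u k = ν k • u k) {k₀ : Fin n} (hν : ∀ k, k ≠ k₀ → ν k ≠ 0)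
    {v : Fin n → ℝ} (hv : M *ᵥ v = 0) (i : Fin n) :
    v i = (u k₀ ⬝ᵥ v) * u k₀ i := by
  have hr : ∀ l, l ≠ k₀ → u l ⬝ᵥ v = 0 := by
    intro l hl
    have h1 : u l ⬝ᵥ (M *ᵥ v) = 0 := by rw [hv, dotProduct_zero]
    rw [Matrix.dotProduct_mulVec, ← Matrix.mulVec_transpose, hMs, hM l,
      smul_dotProduct, smul_eq_mul] at h1
    exact (mul_eq_zero.mp h1).resolve_left (hν l hl)
  rw [expand_vec hcomp v i]
  rw [Finset.sum_eq_single k₀]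
  · intro l _ hl
    rw [hr l hl, zero_mul]
  · intro h; exact absurd (Finset.mem_univ k₀) h



variable {n : ℕ}

lemma eval_charpoly (M : Matrix (Fin n) (Fin n) ℝ) (t : ℝ) :
    M.charpoly.eval t = (t • (1 : Matrix (Fin n) (Fin n) ℝ) - M).det := by
  rw [Matrix.charpoly, ← Polynomial.coe_evalRingHom, RingHom.map_det]
  congr 1
  ext i j
  by_cases h : i = j <;>
    simp [Matrix.charmatrix_apply, Matrix.diagonal_apply, h, Matrix.one_apply,
      Matrix.sub_apply, Matrix.smul_apply, Matrix.map_apply]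

lemma charpoly_conj {U B V : Matrix (Fin n) (Fin n) ℝ} (hUV : U * V = 1) :
    (U * B * V).charpoly = B.charpoly := by
  have key : charmatrix (U * B * V) =
      U.map (C : ℝ →+* ℝ[X]) * charmatrix B * V.map (C : ℝ →+* ℝ[X]) := by
    unfold charmatrix
    simp only [RingHom.mapMatrix_apply]
    rw [Matrix.mul_sub, Matrix.sub_mul]
    congr 1
    · rw [Matrix.scalar_apply, ← Matrix.smul_one_eq_diagonal, Matrix.mul_smul, Matrix.mul_one,
        Matrix.smul_mul, ← Matrix.map_mul, hUV, Matrix.map_one _ (map_zero C) (map_one C)]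
    · rw [← Matrix.map_mul, ← Matrix.map_mul]
  have hdet1 : (U.map (C : ℝ →+* ℝ[X])).det * (V.map (C : ℝ →+* ℝ[X])).det = 1 := by
    rw [← Matrix.det_mul, ← Matrix.map_mul, hUV, Matrix.map_one _ (map_zero C) (map_one C),
      Matrix.det_one]
  have : (U * B * V).charpoly =
      (U.map (C : ℝ →+* ℝ[X])).det * (charmatrix B).det * (V.map (C : ℝ →+* ℝ[X])).det := by
    rw [Matrix.charpoly, key, Matrix.det_mul, Matrix.det_mul]
  rw [this, Matrix.charpoly]
  linear_combination (charmatrix B).det * hdet1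



variable {n : ℕ}

-- spectral data as plain matrix algebra
lemma spectral_package {A : Matrix (Fin n) (Fin n) ℝ} (hH : A.IsHermitian) :
    ∃ (u : Fin n → Fin n → ℝ) (μ : Fin n → ℝ),
      (∀ k l, u k ⬝ᵥ u l = if k = l then (1:ℝ) else 0) ∧
      (∀ i j, (∑ k, u k i * u k j) = if i = j then (1:ℝ) else 0) ∧
      (∀ k, A *ᵥ u k = μ k • u k) ∧
      A.charpoly = ∏ k, (X - C (μ k)) := by
  classical
  set U : Matrix (Fin n) (Fin n) ℝ := (hH.eigenvectorUnitary : Matrix (Fin n) (Fin n) ℝ) with hU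
  set μ : Fin n → ℝ := hH.eigenvalues with hμ
  have hUst : U * star U = 1 := (Matrix.mem_unitaryGroup_iff).mp hH.eigenvectorUnitary.2
  have hstU : star U * U = 1 := (Matrix.mem_unitaryGroup_iff').mp hH.eigenvectorUnitary.2
  have hst : star U = Uᵀ := by
    ext i j
    simp [Matrix.star_apply]
  have hD : (Matrix.diagonal (RCLike.ofReal ∘ μ) : Matrix (Fin n) (Fin n) ℝ) =
      Matrix.diagonal μ := rfl
  have hspec : A = U * Matrix.diagonal μ * Uᵀ := by
    rw [← hst, ← hD]; exact hH.spectral_theorem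
  refine ⟨fun k i => U i k, μ, ?_, ?_, ?_, ?_⟩
  · intro k l
    have h := congrFun (congrFun hstU k) l
    rw [Matrix.mul_apply, Matrix.one_apply] at h
    simp only [hst, Matrix.transpose_apply] at h
    simpa [dotProduct] using h
  · intro i j
    have h := congrFun (congrFun hUst i) j
    rw [Matrix.mul_apply, Matrix.one_apply] at h
    simp only [hst, Matrix.transpose_apply] at h
    simpa using h
  · intro k
    have hUtU : Uᵀ * U = 1 := by rw [← hst]; exact hstU
    have hAU : A * U = U * Matrix.diagonal μ := by
      rw [hspec, Matrix.mul_assoc, hUtU, Matrix.mul_one]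
    funext i
    have := congrFun (congrFun hAU i) k
    rw [Matrix.mul_apply, Matrix.mul_diagonal] at this
    simpa [Matrix.mulVec, dotProduct, Pi.smul_apply, smul_eq_mul, mul_comm] using this
  · have h1 : A.charpoly = (Matrix.diagonal μ).charpoly := by
      rw [hspec]
      have hUV : U * Uᵀ = 1 := by rw [← hst]; exact hUst
      exact charpoly_conj hUV
    rw [h1, Matrix.charpoly_of_upperTriangular _ (Matrix.blockTriangular_diagonal μ)]
    exact Finset.prod_congr rfl fun k _ => by rw [Matrix.diagonal_apply_eq]


lemma pd_quad {m : Type*} [Fintype m] {P : Matrix m m ℝ} (hP : P.PosDef)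
    {x : m → ℝ} (hx : x ≠ 0) : 0 < x ⬝ᵥ (P *ᵥ x) := by
  have h := hP.dotProduct_mulVec_pos hx
  rwa [star_trivial] at h

lemma posdef_add_smul {m : Type*} [Fintype m] [DecidableEq m] {P : Matrix m m ℝ}
    (hP : P.PosDef) {t : ℝ} (ht : 0 ≤ t) : (P + t • 1).PosDef := by
  refine hP.add_posSemidef ?_
  rw [Matrix.smul_one_eq_diagonal]
  exact Matrix.PosSemidef.diagonal (fun i => ht)

lemma pd_pos_of_zero_coord {A : Matrix (Fin n) (Fin n) ℝ} {i : Fin n}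
    (hPD : (A.submatrix (fun j : {j : Fin n // j ≠ i} => (j : Fin n))
      (fun j : {j : Fin n // j ≠ i} => (j : Fin n))).PosDef)
    {w : Fin n → ℝ} (hw0 : w i = 0) (hwne : w ≠ 0) : 0 < w ⬝ᵥ (A *ᵥ w) := by
  have hsub : (fun j : {j : Fin n // j ≠ i} => w (j : Fin n)) ≠ 0 := by
    intro hcon
    apply hwne; funext j
    by_cases hj : j = i
    · rw [hj, hw0]; rfl
    · exact congrFun hcon ⟨j, hj⟩
  have h := pd_quad hPD hsub
  rwa [dot_submatrix A i w hw0] at h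

end Stmt11Aux

/-- For `A ∈ 𝒴_n`: `A` has exactly one negative eigenvalue `−λ` (with `λ > 0`), simple;
`adj(A + t·Id)` has all entries positive for `t ∈ [0, λ]`; and every eigenvector of `A`
for `−λ` has all entries nonzero and of the same sign. -/
theorem stmt11 (n : ℕ) (hn : 2 ≤ n) (A : Matrix (Fin n) (Fin n) ℝ) (hA : A ∈ Yset n) :
    ∃ lam : ℝ, 0 < lam ∧
      (∀ μ : ℝ, μ < 0 →
        (Matrix.charpoly A).rootMultiplicity μ = if μ = -lam then 1 else 0) ∧
      (∀ t ∈ Set.Icc (0 : ℝ) lam, ∀ i j, 0 < (A + t • (1 : Matrix (Fin n) (Fin n) ℝ)).adjugate i j) ∧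
      (∀ v : Fin n → ℝ, v ≠ 0 → A *ᵥ v = (-lam) • v →
        (∀ i, v i ≠ 0) ∧ ((∀ i, 0 < v i) ∨ (∀ i, v i < 0))) := by
  classical
  open Stmt11Aux Polynomial Finset in
  obtain ⟨hsymm, hdiag, hadjpos, hdet, hPD⟩ := hA
  have hH : A.IsHermitian := by
    show Aᴴ = A
    have hct : Aᴴ = Aᵀ := by ext i j; simp [Matrix.conjTranspose_apply]
    rw [hct]; exact hsymm
  obtain ⟨u, μ, horm, hcomp, heig, hcp⟩ := Stmt11Aux.spectral_package hH
  -- determinant of the shifted matrix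
  have hdetprod : ∀ t : ℝ, (A + t • (1 : Matrix (Fin n) (Fin n) ℝ)).det = ∏ k, (μ k + t) := by
    intro t
    have h1 : (A + t • (1 : Matrix (Fin n) (Fin n) ℝ)) =
        -(((-t) • (1 : Matrix (Fin n) (Fin n) ℝ)) - A) := by
      ext i j
      simp only [Matrix.add_apply, Matrix.neg_apply, Matrix.sub_apply, Matrix.smul_apply,
        smul_eq_mul]
      ring
    rw [h1, Matrix.det_neg, ← Stmt11Aux.eval_charpoly, hcp]
    rw [Polynomial.eval_prod]
    simp only [Polynomial.eval_sub, Polynomial.eval_X, Polynomial.eval_C]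
    have h2 : ∀ k : Fin n, -t - μ k = (-1) * (μ k + t) := fun k => by ring
    simp_rw [h2]
    rw [Finset.prod_mul_distrib, Finset.prod_const, ← mul_assoc, Finset.card_univ,
      Fintype.card_fin, ← pow_add]
    rw [Even.neg_one_pow ⟨n, rfl⟩, one_mul]
  have hA0 : A + (0:ℝ) • (1 : Matrix (Fin n) (Fin n) ℝ) = A := by simp
  have hdet0 : A.det = ∏ k, μ k := by
    have := hdetprod 0
    rw [hA0] at this
    simpa using this
  -- there is a negative eigenvalue
  obtain ⟨k₀, hk₀⟩ : ∃ k₀, μ k₀ < 0 := by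
    by_contra h
    push_neg at h
    have : (0:ℝ) ≤ ∏ k, μ k := Finset.prod_nonneg fun k _ => h k
    rw [← hdet0] at this
    linarith
  -- all other eigenvalues are positive
  have hone : ∀ k, k ≠ k₀ → 0 < μ k := by
    have key : ∀ k l, k ≠ l → μ k ≤ 0 → μ l ≤ 0 → False := by
      intro k l hkl hk hl
      have hn0 : 0 < n := by omega
      set i : Fin n := ⟨0, hn0⟩ with hi
      have quad : ∀ a b : ℝ, (a • u k + b • u l) ⬝ᵥ (A *ᵥ (a • u k + b • u l)) =
          μ k * a ^ 2 + μ l * b ^ 2 := fun a b => Stmt11Aux.two_quad horm heig hkl a b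
      have ukk : u k ⬝ᵥ u k = 1 := by rw [horm k k, if_pos rfl]
      have ukne : u k ≠ 0 := by
        intro h; rw [h] at ukk; simp at ukk
      by_cases h0 : u k i = 0
      · have hpos := Stmt11Aux.pd_pos_of_zero_coord (hPD i) h0 ukne
        have hq := quad 1 0
        have hw : (1:ℝ) • u k + (0:ℝ) • u l = u k := by simp
        rw [hw] at hq
        rw [hq] at hpos
        nlinarith
      · set w : Fin n → ℝ := (u l i) • u k + (-(u k i)) • u l with hw
        have hw0 : w i = 0 := by simp [hw]; ring
        have hwne : w ≠ 0 := by
          intro hcon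
          have hd : u l ⬝ᵥ w = -(u k i) := by
            rw [hw]
            rw [dotProduct_add, dotProduct_smul, dotProduct_smul,
              horm l k, horm l l, if_neg (Ne.symm hkl), if_pos rfl]
            simp
          rw [hcon] at hd
          simp at hd
          exact h0 hd
        have hpos := Stmt11Aux.pd_pos_of_zero_coord (hPD i) hw0 hwne
        have hq := quad (u l i) (-(u k i))
        rw [← hw] at hq
        rw [hq] at hpos
        nlinarith [sq_nonneg (u l i), sq_nonneg (u k i)]
    intro k hk
    by_contra h
    push_neg at h
    exact key k k₀ hk h (le_of_lt hk₀)
  set lam : ℝ := -μ k₀ with hlam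
  have hlam_pos : 0 < lam := by simp [hlam]; exact hk₀
  -- eigen-relations for the shifted matrices
  have hNeig : ∀ (t : ℝ) (k), (A + t • (1 : Matrix (Fin n) (Fin n) ℝ)) *ᵥ u k
      = (μ k + t) • u k := by
    intro t k
    rw [Matrix.add_mulVec, heig, Matrix.smul_mulVec, Matrix.one_mulVec]
    funext m
    simp only [Pi.add_apply, Pi.smul_apply, smul_eq_mul]
    ring
  have hsymmN : ∀ t : ℝ, (A + t • (1 : Matrix (Fin n) (Fin n) ℝ))ᵀ
      = A + t • (1 : Matrix (Fin n) (Fin n) ℝ) := by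
    intro t
    rw [Matrix.transpose_add, Matrix.transpose_smul, Matrix.transpose_one]
    rw [show (Aᵀ = A) from hsymm]
  -- determinant negative on [0, lam)
  have hdetneg : ∀ t : ℝ, 0 ≤ t → t < lam →
      (A + t • (1 : Matrix (Fin n) (Fin n) ℝ)).det < 0 := by
    intro t ht htl
    rw [hdetprod t, ← Finset.mul_prod_erase Finset.univ _ (Finset.mem_univ k₀)]
    have h1 : μ k₀ + t < 0 := by simp [hlam] at htl; linarith
    have h2 : (0:ℝ) < ∏ k ∈ Finset.univ.erase k₀, (μ k + t) := by
      refine Finset.prod_pos fun k hk => ?_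
      have := hone k (Finset.mem_erase.mp hk).1
      linarith
    exact mul_neg_of_neg_of_pos h1 h2
  have hdetlam : (A + lam • (1 : Matrix (Fin n) (Fin n) ℝ)).det = 0 := by
    rw [hdetprod lam]
    exact Finset.prod_eq_zero (Finset.mem_univ k₀) (by simp [hlam])
  -- diagonal adjugate entries are positive for t ≥ 0
  have hsubshift : ∀ (t : ℝ) (i : Fin n),
      ((A + t • (1 : Matrix (Fin n) (Fin n) ℝ)).submatrix
        (fun j : {j : Fin n // j ≠ i} => (j : Fin n))
        (fun j : {j : Fin n // j ≠ i} => (j : Fin n)))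
      = (A.submatrix (fun j : {j : Fin n // j ≠ i} => (j : Fin n))
          (fun j : {j : Fin n // j ≠ i} => (j : Fin n))) + t • 1 := by
    intro t i
    ext a b
    simp only [Matrix.submatrix_apply, Matrix.add_apply, Matrix.smul_apply, Matrix.one_apply,
      smul_eq_mul]
    congr 1
    by_cases hab : a = b
    · rw [hab, if_pos rfl, if_pos rfl]
    · rw [if_neg hab, if_neg (fun hc => hab (Subtype.ext hc))]
  have hdiagpos : ∀ t : ℝ, 0 ≤ t → ∀ i,
      0 < (A + t • (1 : Matrix (Fin n) (Fin n) ℝ)).adjugate i i := by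
    intro t ht i
    rw [Stmt11Aux.adjugate_diag, hsubshift t i]
    exact (Stmt11Aux.posdef_add_smul (hPD i) ht).det_pos
  -- off-diagonal adjugate entries never vanish on [0, lam)
  have hoff : ∀ t : ℝ, 0 ≤ t → t < lam → ∀ i j, i ≠ j →
      (A + t • (1 : Matrix (Fin n) (Fin n) ℝ)).adjugate i j ≠ 0 := by
    intro t ht htl i j hij hz
    set N := A + t • (1 : Matrix (Fin n) (Fin n) ℝ) with hN
    have hdN : N.det < 0 := hdetneg t ht htl
    have hdNu : IsUnit N.det := isUnit_iff_ne_zero.mpr (ne_of_lt hdN)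
    have hμt : ∀ k, μ k + t ≠ 0 := by
      intro k
      rcases eq_or_ne k k₀ with h | h
      · subst h
        have : μ k + t < 0 := by simp [hlam] at htl; linarith
        linarith
      · have := hone k h
        linarith
    have hBeig : ∀ k, N⁻¹ *ᵥ u k = (μ k + t)⁻¹ • u k := by
      intro k
      have h1 : N⁻¹ *ᵥ (N *ᵥ u k) = u k := by
        rw [Matrix.mulVec_mulVec, Matrix.nonsing_inv_mul _ hdNu, Matrix.one_mulVec]
      rw [hNeig t k, Matrix.mulVec_smul] at h1
      calc N⁻¹ *ᵥ u k = (μ k + t)⁻¹ • ((μ k + t) • (N⁻¹ *ᵥ u k)) := by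
            rw [smul_smul, inv_mul_cancel₀ (hμt k), one_smul]
        _ = (μ k + t)⁻¹ • u k := by rw [h1]
    have hBentry : ∀ p q, N⁻¹ p q = (N.det)⁻¹ * N.adjugate p q := by
      intro p q
      rw [Matrix.inv_def, Ring.inverse_eq_inv', Matrix.smul_apply, smul_eq_mul]
    have hBij : N⁻¹ i j = 0 := by rw [hBentry, hz, mul_zero]
    have hBji : N⁻¹ j i = 0 := by
      have hsy : N⁻¹ᵀ = N⁻¹ := by rw [Matrix.transpose_nonsing_inv, hsymmN t]
      have := congrFun (congrFun hsy i) j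
      rw [Matrix.transpose_apply] at this
      rw [this, hBij]
    have hdinv : (N.det)⁻¹ < 0 := inv_lt_zero.mpr hdN
    have hBii : N⁻¹ i i < 0 := by
      rw [hBentry]
      exact mul_neg_of_neg_of_pos hdinv (hdiagpos t ht i)
    have hBjj : N⁻¹ j j < 0 := by
      rw [hBentry]
      exact mul_neg_of_neg_of_pos hdinv (hdiagpos t ht j)
    -- choose the test vector
    obtain ⟨a, b, hab0, hwd⟩ : ∃ a b : ℝ, (a ≠ 0 ∨ b ≠ 0) ∧ a * u k₀ i + b * u k₀ j = 0 := by
      by_cases h0 : u k₀ i = 0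
      · exact ⟨1, 0, Or.inl one_ne_zero, by rw [h0]; ring⟩
      · exact ⟨u k₀ j, -(u k₀ i), Or.inr (by simpa using h0), by ring⟩
    set w : Fin n → ℝ := a • (Pi.single i (1:ℝ) : Fin n → ℝ) + b • (Pi.single j (1:ℝ) : Fin n → ℝ) with hw
    have hdot : ∀ (y : Fin n → ℝ), y ⬝ᵥ w = a * y i + b * y j := by
      intro y
      rw [hw, dotProduct_add, dotProduct_smul, dotProduct_smul,
        dotProduct_single, dotProduct_single]
      simp [mul_comm]
    have hq1 : w ⬝ᵥ (N⁻¹ *ᵥ w) = a^2 * N⁻¹ i i + b^2 * N⁻¹ j j := by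
      have hmv : N⁻¹ *ᵥ w = a • (fun m => N⁻¹ m i) + b • (fun m => N⁻¹ m j) := by
        rw [hw, Matrix.mulVec_add, Matrix.mulVec_smul, Matrix.mulVec_smul,
          Matrix.mulVec_single, Matrix.mulVec_single]
        simp
        rfl
      have hdot' : ∀ (y : Fin n → ℝ), w ⬝ᵥ y = a * y i + b * y j := by
        intro y
        rw [hw, add_dotProduct, smul_dotProduct, smul_dotProduct,
          single_dotProduct, single_dotProduct]
        simp
      rw [hmv]
      rw [dotProduct_add, dotProduct_smul, dotProduct_smul]
      rw [hdot', hdot']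
      simp only [smul_eq_mul]
      rw [hBij, hBji]
      ring
    have hq2 : w ⬝ᵥ (N⁻¹ *ᵥ w) = ∑ k, (μ k + t)⁻¹ * (u k ⬝ᵥ w) ^ 2 :=
      Stmt11Aux.expand_quad hcomp hBeig w
    have hq3 : 0 ≤ ∑ k, (μ k + t)⁻¹ * (u k ⬝ᵥ w) ^ 2 := by
      refine Finset.sum_nonneg fun k _ => ?_
      rcases eq_or_ne k k₀ with h | h
      · subst h
        rw [hdot, hwd]
        simp
      · have h1 : 0 < μ k + t := by have := hone k h; linarith
        have h2 : 0 < (μ k + t)⁻¹ := inv_pos.mpr h1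
        positivity
    have hq4 : a^2 * N⁻¹ i i + b^2 * N⁻¹ j j < 0 := by
      rcases hab0 with h | h
      · have ha2 : 0 < a^2 := by positivity
        nlinarith [sq_nonneg b]
      · have hb2 : 0 < b^2 := by positivity
        nlinarith [sq_nonneg a]
    rw [hq2] at hq1
    linarith
  -- entrywise positivity on [0, lam) via the intermediate value theorem
  have hcont : ∀ i j, Continuous fun t : ℝ =>
      (A + t • (1 : Matrix (Fin n) (Fin n) ℝ)).adjugate i j := by
    intro i j
    exact ((continuous_const.add (continuous_id.smul continuous_const)).matrix_adjugate).matrix_elem i j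
  have hnz : ∀ t : ℝ, 0 ≤ t → t < lam → ∀ i j,
      (A + t • (1 : Matrix (Fin n) (Fin n) ℝ)).adjugate i j ≠ 0 := by
    intro t ht htl i j
    by_cases hij : i = j
    · subst hij
      exact ne_of_gt (hdiagpos t ht i)
    · exact hoff t ht htl i j hij
  have hf0 : ∀ i j, 0 < (A + (0:ℝ) • (1 : Matrix (Fin n) (Fin n) ℝ)).adjugate i j := by
    intro i j
    rw [hA0]
    exact hadjpos i j
  have hivt : ∀ t : ℝ, 0 ≤ t → t < lam → ∀ i j,
      0 < (A + t • (1 : Matrix (Fin n) (Fin n) ℝ)).adjugate i j := by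
    intro t ht htl i j
    by_contra hle
    push_neg at hle
    have hlt : (A + t • (1 : Matrix (Fin n) (Fin n) ℝ)).adjugate i j < 0 :=
      lt_of_le_of_ne hle (hnz t ht htl i j)
    have hm : (0:ℝ) ∈ (fun s : ℝ => (A + s • (1 : Matrix (Fin n) (Fin n) ℝ)).adjugate i j) ''
        Set.Icc 0 t := by
      apply intermediate_value_Icc' ht (hcont i j).continuousOn
      exact ⟨le_of_lt hlt, le_of_lt (hf0 i j)⟩
    obtain ⟨c, hc, hc0⟩ := hm
    exact hnz c hc.1 (lt_of_le_of_lt hc.2 htl) i j hc0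
  have hadj_le_lam : ∀ i j, 0 ≤ (A + lam • (1 : Matrix (Fin n) (Fin n) ℝ)).adjugate i j := by
    intro i j
    by_contra h
    push_neg at h
    have hm : (0:ℝ) ∈ (fun s : ℝ => (A + s • (1 : Matrix (Fin n) (Fin n) ℝ)).adjugate i j) ''
        Set.Icc 0 lam := by
      apply intermediate_value_Icc' (le_of_lt hlam_pos) (hcont i j).continuousOn
      exact ⟨le_of_lt h, le_of_lt (hf0 i j)⟩
    obtain ⟨c, hc, hc0⟩ := hm
    have hc0' : (A + c • (1 : Matrix (Fin n) (Fin n) ℝ)).adjugate i j = 0 := hc0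
    have hclam : c ≠ lam := by
      intro hceq
      rw [hceq] at hc0'
      rw [hc0'] at h
      exact lt_irrefl 0 h
    exact hnz c hc.1 (lt_of_le_of_ne hc.2 hclam) i j hc0'
  -- structure at t = lam
  have hν : ∀ k, k ≠ k₀ → μ k + lam ≠ 0 := by
    intro k hk
    have := hone k hk
    have : 0 < μ k + lam := by linarith
    linarith
  have hcol : ∀ j i, (A + lam • (1 : Matrix (Fin n) (Fin n) ℝ)).adjugate i j =
      (u k₀ ⬝ᵥ (fun m => (A + lam • (1 : Matrix (Fin n) (Fin n) ℝ)).adjugate m j)) * u k₀ i := by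
    intro j
    have hv : (A + lam • (1 : Matrix (Fin n) (Fin n) ℝ)) *ᵥ
        (fun m => (A + lam • (1 : Matrix (Fin n) (Fin n) ℝ)).adjugate m j) = 0 := by
      funext p
      have hma := congrFun (congrFun (Matrix.mul_adjugate
        (A + lam • (1 : Matrix (Fin n) (Fin n) ℝ))) p) j
      rw [hdetlam, zero_smul] at hma
      rw [Matrix.mul_apply] at hma
      simpa [Matrix.mulVec, dotProduct] using hma
    exact Stmt11Aux.kernel_col hcomp (hsymmN lam) (hNeig lam) hν hv
  have hu_ne : ∀ m, u k₀ m ≠ 0 := by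
    intro m hm
    have h1 := hcol m m
    rw [hm, mul_zero] at h1
    exact ne_of_gt (hdiagpos lam (le_of_lt hlam_pos) m) h1
  have hadj_lam_pos : ∀ i j,
      0 < (A + lam • (1 : Matrix (Fin n) (Fin n) ℝ)).adjugate i j := by
    intro i j
    have hjj := hdiagpos lam (le_of_lt hlam_pos) j
    have h2 := hcol j j
    have hcj : (u k₀ ⬝ᵥ (fun m => (A + lam • (1 : Matrix (Fin n) (Fin n) ℝ)).adjugate m j)) ≠ 0 := by
      intro hc
      rw [hc, zero_mul] at h2
      exact ne_of_gt hjj h2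
    have h1 := hcol j i
    have hne : (A + lam • (1 : Matrix (Fin n) (Fin n) ℝ)).adjugate i j ≠ 0 := by
      rw [h1]
      exact mul_ne_zero hcj (hu_ne i)
    exact lt_of_le_of_ne (hadj_le_lam i j) (Ne.symm hne)
  have husign : ∀ i j, 0 < u k₀ i * u k₀ j := by
    intro i j
    have h1 := hcol j i
    have h2 := hcol j j
    have hij := hadj_lam_pos i j
    have hjj := hadj_lam_pos j j
    set c := u k₀ ⬝ᵥ (fun m => (A + lam • (1 : Matrix (Fin n) (Fin n) ℝ)).adjugate m j) with hc
    have hcne : c ≠ 0 := by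
      intro h
      rw [h, zero_mul] at h2
      exact ne_of_gt hjj h2
    have hc2 : 0 < c ^ 2 := lt_of_le_of_ne (sq_nonneg c) (Ne.symm (pow_ne_zero 2 hcne))
    have he : (A + lam • (1 : Matrix (Fin n) (Fin n) ℝ)).adjugate i j *
        (A + lam • (1 : Matrix (Fin n) (Fin n) ℝ)).adjugate j j = c ^ 2 * (u k₀ i * u k₀ j) := by
      rw [h1, h2]
      ring
    nlinarith
  -- assemble the three conclusions
  refine ⟨lam, hlam_pos, ?_, ?_, ?_⟩
  · intro μ' hμ'
    rw [← Polynomial.count_roots]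
    have hroots : A.charpoly.roots = Multiset.map μ Finset.univ.val := by
      rw [hcp, Finset.prod_eq_multiset_prod]
      have hco : (fun k : Fin n => X - C (μ k)) = (fun a : ℝ => X - C a) ∘ μ := rfl
      rw [hco, ← Multiset.map_map]
      exact Polynomial.roots_multiset_prod_X_sub_C _
    rw [hroots, Multiset.count_map]
    have hfv : Multiset.filter (fun k => μ' = μ k) Finset.univ.val
        = (Finset.univ.filter (fun k => μ' = μ k)).val := rfl
    rw [hfv]
    by_cases hcase : μ' = -lam
    · rw [if_pos hcase]
      have hsing : Finset.univ.filter (fun k => μ' = μ k) = {k₀} := by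
        apply Finset.eq_singleton_iff_unique_mem.mpr
        constructor
        · rw [Finset.mem_filter]
          refine ⟨Finset.mem_univ _, ?_⟩
          rw [hcase, hlam, neg_neg]
        · intro k hk
          rcases eq_or_ne k k₀ with h | h
          · exact h
          · exfalso
            have h1 := hone k h
            have h2 : μ' = μ k := (Finset.mem_filter.mp hk).2
            linarith
      rw [hsing]
      simp
    · rw [if_neg hcase]
      have hemp : Finset.univ.filter (fun k => μ' = μ k) = ∅ := by
        rw [Finset.filter_eq_empty_iff]
        intro k _
        intro hkeq
        rcases eq_or_ne k k₀ with h | h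
        · subst h
          apply hcase
          rw [hkeq, hlam, neg_neg]
        · have := hone k h
          linarith
      rw [hemp]
      simp
  · rintro t ⟨ht0, htl⟩ i j
    rcases eq_or_lt_of_le htl with h | h
    · subst h
      exact hadj_lam_pos i j
    · exact hivt t ht0 h i j
  · intro v hv0 hAv
    have hNv : (A + lam • (1 : Matrix (Fin n) (Fin n) ℝ)) *ᵥ v = 0 := by
      rw [Matrix.add_mulVec, hAv, Matrix.smul_mulVec, Matrix.one_mulVec]
      funext m
      simp only [Pi.add_apply, Pi.smul_apply, Pi.zero_apply, smul_eq_mul, Pi.neg_apply]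
      ring
    have hker := Stmt11Aux.kernel_col hcomp (hsymmN lam) (hNeig lam) hν hNv
    have hrne : u k₀ ⬝ᵥ v ≠ 0 := by
      intro h
      apply hv0
      funext m
      rw [hker m, h, zero_mul]
      rfl
    constructor
    · intro i
      rw [hker i]
      exact mul_ne_zero hrne (hu_ne i)
    · have hvv : ∀ i j, 0 < v i * v j := by
        intro i j
        rw [hker i, hker j]
        have h1 := husign i j
        have hr2 : 0 < (u k₀ ⬝ᵥ v) ^ 2 :=
          lt_of_le_of_ne (sq_nonneg _) (Ne.symm (pow_ne_zero 2 hrne))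
        nlinarith
      have hn0 : 0 < n := by omega
      set i0 : Fin n := ⟨0, hn0⟩ with hi0
      rcases lt_trichotomy (v i0) 0 with h | h | h
      · right
        intro i
        rcases mul_pos_iff.mp (hvv i i0) with ⟨h1, h2⟩ | ⟨h1, h2⟩
        · linarith
        · exact h1
      · exfalso
        have h2 := hvv i0 i0
        rw [h] at h2
        simp at h2
      · left
        intro i
        rcases mul_pos_iff.mp (hvv i i0) with ⟨h1, h2⟩ | ⟨h1, h2⟩
        · exact h1
        · linarith
end

section
/- Let n ≥ 2 and let A belong to the closure of 𝒴_n in ℝ^{n×n}. If det A = 0, then A is positive semidefinite. If det A ≠ 0, then A has exactly one negative eigenvalue counted with multiplicity (i.e., A has signature (n−1, 1)). -/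
open Matrix Polynomial

lemma my_charpoly_diagonal {n : Type*} [Fintype n] [DecidableEq n] (d : n → ℝ) :
    (Matrix.diagonal d).charpoly = ∏ i, (X - C (d i)) := by
  have h : charmatrix (Matrix.diagonal d) = Matrix.diagonal (fun i => X - C (d i)) := by
    ext i j
    by_cases hij : i = j
    · subst hij; simp
    · simp [charmatrix_apply_ne _ _ _ hij, Matrix.diagonal_apply_ne _ hij]
  rw [Matrix.charpoly, h, Matrix.det_diagonal]

lemma my_charpoly_conj {n : Type*} [Fintype n] [DecidableEq n] (U D : Matrix n n ℝ)
    (h1 : U * star U = 1) :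
    (U * D * star U).charpoly = D.charpoly := by
  classical
  let f : Matrix n n ℝ →+* Matrix n n ℝ[X] := (Polynomial.C : ℝ →+* ℝ[X]).mapMatrix
  have hcomm : ∀ M : Matrix n n ℝ[X], M * Matrix.scalar n (X : ℝ[X]) =
      Matrix.scalar n (X : ℝ[X]) * M :=
    fun M => ((Matrix.scalar_commute (X : ℝ[X]) (fun r => Commute.all _ _) M).eq).symm
  have key : f U * charmatrix D * f (star U) = charmatrix (U * D * star U) := by
    rw [charmatrix, charmatrix, Matrix.mul_sub, Matrix.sub_mul]
    congr 1
    · calc f U * Matrix.scalar n (X : ℝ[X]) * f (star U)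
          = Matrix.scalar n (X : ℝ[X]) * (f U * f (star U)) := by
            rw [hcomm (f U), Matrix.mul_assoc]
        _ = Matrix.scalar n (X : ℝ[X]) := by
            rw [← _root_.map_mul, h1, _root_.map_one, Matrix.mul_one]
    · show f U * f D * f (star U) = f (U * D * star U)
      rw [← _root_.map_mul, ← _root_.map_mul]
  have hdet : (f U).det * (f (star U)).det = 1 := by
    rw [← Matrix.det_mul, ← _root_.map_mul, h1, _root_.map_one, Matrix.det_one]
  calc (U * D * star U).charpoly = (charmatrix (U * D * star U)).det := rfl
    _ = (f U * charmatrix D * f (star U)).det := by rw [key]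
    _ = (f U).det * (charmatrix D).det * (f (star U)).det := by
        rw [Matrix.det_mul, Matrix.det_mul]
    _ = (charmatrix D).det * ((f U).det * (f (star U)).det) := by ring
    _ = D.charpoly := by rw [hdet, mul_one]; rfl

lemma my_key {n : ℕ} {A : Matrix (Fin n) (Fin n) ℝ} (hA : A.IsHermitian)
    (hq : ∀ w : Fin n → ℝ, (∃ i, w i = 0) → 0 ≤ w ⬝ᵥ A *ᵥ w)
    {i j : Fin n} (hij : i ≠ j) (hi : hA.eigenvalues i < 0) : 0 < hA.eigenvalues j := by
  by_contra hcon
  push_neg at hcon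
  set lam := hA.eigenvalues i with hlam
  set nu := hA.eigenvalues j with hnu
  set u : Fin n → ℝ := ⇑(hA.eigenvectorBasis i) with hu
  set v : Fin n → ℝ := ⇑(hA.eigenvectorBasis j) with hv
  have hon := hA.eigenvectorBasis.orthonormal
  have huu : u ⬝ᵥ u = 1 := by
    have h1 : inner ℝ (hA.eigenvectorBasis i) (hA.eigenvectorBasis i) = 1 := by
      rw [real_inner_self_eq_norm_mul_norm, hon.1 i]; norm_num
    rw [PiLp.inner_apply] at h1
    simpa [dotProduct, hu, hv, sq, mul_comm] using h1
  have hvv : v ⬝ᵥ v = 1 := by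
    have h1 : inner ℝ (hA.eigenvectorBasis j) (hA.eigenvectorBasis j) = 1 := by
      rw [real_inner_self_eq_norm_mul_norm, hon.1 j]; norm_num
    rw [PiLp.inner_apply] at h1
    simpa [dotProduct, hu, hv, sq, mul_comm] using h1
  have huv : u ⬝ᵥ v = 0 := by
    have h1 : inner ℝ (hA.eigenvectorBasis i) (hA.eigenvectorBasis j) = 0 := hon.2 hij
    rw [PiLp.inner_apply] at h1
    simpa [dotProduct, hu, hv, sq, mul_comm] using h1
  have hvu : v ⬝ᵥ u = 0 := by rwa [dotProduct_comm] at huv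
  have hAu : A *ᵥ u = lam • u := hA.mulVec_eigenvectorBasis i
  have hAv : A *ᵥ v = nu • v := hA.mulVec_eigenvectorBasis j
  obtain ⟨k, hk⟩ : ∃ k, v k ≠ 0 := by
    by_contra hall
    push_neg at hall
    have : hA.eigenvectorBasis j = 0 := by
      apply PiLp.ext
      intro k
      exact hall k
    exact hon.ne_zero j this
  set w : Fin n → ℝ := v k • u - u k • v with hw
  have hwk : w k = 0 := by simp [hw]; ring
  have hqw : w ⬝ᵥ A *ᵥ w = lam * (v k)^2 + nu * (u k)^2 := by
    rw [hw, mulVec_sub, mulVec_smul, mulVec_smul, hAu, hAv]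
    simp only [sub_dotProduct, dotProduct_sub, smul_dotProduct, dotProduct_smul,
      huu, hvv, huv, hvu, smul_eq_mul]
    ring
  have h0 := hq w ⟨k, hwk⟩
  rw [hqw] at h0
  have hvk2 : 0 < v k ^ 2 := by positivity
  have h1 : lam * v k ^ 2 < 0 := mul_neg_of_neg_of_pos hi hvk2
  have h2 : nu * u k ^ 2 ≤ 0 := mul_nonpos_of_nonpos_of_nonneg hcon (sq_nonneg _)
  linarith

lemma my_sum_subtype_ne {n : ℕ} (i : Fin n) (f : Fin n → ℝ) (hf : f i = 0) :
    (∑ j : {j : Fin n // j ≠ i}, f j) = ∑ q, f q := by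
  rw [← Finset.sum_subtype (Finset.univ.erase i) (fun x => by simp) f]
  exact Finset.sum_erase _ hf

lemma my_quad_eq {n : ℕ} (B : Matrix (Fin n) (Fin n) ℝ) (i : Fin n) (w : Fin n → ℝ)
    (hwi : w i = 0) :
    w ⬝ᵥ B *ᵥ w = (fun j : {j : Fin n // j ≠ i} => w j) ⬝ᵥ
      ((B.submatrix (fun j : {j : Fin n // j ≠ i} => (j : Fin n))
        (fun j : {j : Fin n // j ≠ i} => (j : Fin n))) *ᵥ (fun j => w j)) := by
  have inner_eq : ∀ p : Fin n,
      (∑ k : {j : Fin n // j ≠ i}, B p k * w k) = ∑ q, B p q * w q := fun p =>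
    my_sum_subtype_ne i (fun q => B p q * w q) (by simp [hwi])
  calc w ⬝ᵥ B *ᵥ w = ∑ p, w p * ∑ q, B p q * w q := by
        simp [dotProduct, mulVec]
    _ = ∑ j : {j : Fin n // j ≠ i}, w j * ∑ q, B (j : Fin n) q * w q :=
        (my_sum_subtype_ne i (fun p => w p * ∑ q, B p q * w q) (by simp [hwi])).symm
    _ = _ := by
        simp only [dotProduct, mulVec, submatrix_apply, inner_eq]

/-- For `A` in the closure of `𝒴_n`: if `det A = 0` then `A` is positive semidefinite;
if `det A ≠ 0` then `A` has exactly one negative eigenvalue counted with multiplicity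
(signature `(n−1, 1)`). -/
theorem stmt12 (n : ℕ) (hn : 2 ≤ n) (A : Matrix (Fin n) (Fin n) ℝ)
    (hA : A ∈ closure (Yset n)) :
    (A.det = 0 → A.PosSemidef) ∧
    (A.det ≠ 0 → ∃ lam : ℝ, lam < 0 ∧
      ∀ μ : ℝ, μ < 0 →
        (Matrix.charpoly A).rootMultiplicity μ = if μ = lam then 1 else 0) := by
  classical
  -- symmetric
  have hsymm : A.IsHermitian := by
    have hclosed : IsClosed {B : Matrix (Fin n) (Fin n) ℝ | B.IsHermitian} := by
      have : {B : Matrix (Fin n) (Fin n) ℝ | B.IsHermitian} = {B | Bᴴ = B} := rfl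
      rw [this]
      exact isClosed_eq (continuous_id.matrix_conjTranspose) continuous_id
    refine closure_minimal (fun B hB => ?_) hclosed hA
    exact (Matrix.conjTranspose_eq_transpose_of_trivial B).trans hB.1
  -- det ≤ 0
  have hdet : A.det ≤ 0 := by
    have hclosed : IsClosed {B : Matrix (Fin n) (Fin n) ℝ | B.det ≤ 0} :=
      isClosed_le (continuous_id.matrix_det) continuous_const
    exact closure_minimal (fun B hB => le_of_lt hB.2.2.2.1) hclosed hA
  -- quadratic form nonnegative on vectors with a zero coordinate
  have hq : ∀ w : Fin n → ℝ, (∃ i, w i = 0) → 0 ≤ w ⬝ᵥ A *ᵥ w := by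
    have hclosed : IsClosed {B : Matrix (Fin n) (Fin n) ℝ |
        ∀ w : Fin n → ℝ, (∃ i, w i = 0) → 0 ≤ w ⬝ᵥ B *ᵥ w} := by
      have heq : {B : Matrix (Fin n) (Fin n) ℝ |
          ∀ w : Fin n → ℝ, (∃ i, w i = 0) → 0 ≤ w ⬝ᵥ B *ᵥ w} =
          ⋂ (w : Fin n → ℝ) (_ : ∃ i, w i = 0), {B | 0 ≤ w ⬝ᵥ B *ᵥ w} := by
        ext B
        simp only [Set.mem_setOf_eq, Set.mem_iInter]
      rw [heq]
      refine isClosed_iInter fun w => isClosed_iInter fun _ => ?_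
      exact isClosed_le continuous_const
        (continuous_const.dotProduct (continuous_id.matrix_mulVec continuous_const))
    refine closure_minimal ?_ hclosed hA
    rintro B hB w ⟨i, hwi⟩
    rw [my_quad_eq B i w hwi]
    have hpsd := (hB.2.2.2.2 i).posSemidef
    have h2 := hpsd.dotProduct_mulVec_nonneg (fun j : {j : Fin n // j ≠ i} => w j)
    rwa [star_trivial] at h2
  -- key eigenvalue fact
  have key : ∀ {i j : Fin n}, i ≠ j → hsymm.eigenvalues i < 0 → 0 < hsymm.eigenvalues j :=
    fun hij hi => my_key hsymm hq hij hi
  have hdetprod : A.det = ∏ i, hsymm.eigenvalues i := by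
    simpa using hsymm.det_eq_prod_eigenvalues
  -- charpoly formula
  have hcharpoly : A.charpoly = ∏ i, (X - C (hsymm.eigenvalues i)) := by
    have hspec := hsymm.spectral_theorem
    have hU : (hsymm.eigenvectorUnitary : Matrix (Fin n) (Fin n) ℝ) *
        star (hsymm.eigenvectorUnitary : Matrix (Fin n) (Fin n) ℝ) = 1 :=
      (Matrix.mem_unitaryGroup_iff).mp hsymm.eigenvectorUnitary.2
    have hdiag : (RCLike.ofReal ∘ hsymm.eigenvalues : Fin n → ℝ) = hsymm.eigenvalues := by
      funext i; simp
    calc A.charpoly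
        = ((hsymm.eigenvectorUnitary : Matrix (Fin n) (Fin n) ℝ) *
            Matrix.diagonal (RCLike.ofReal ∘ hsymm.eigenvalues) *
            star (hsymm.eigenvectorUnitary : Matrix (Fin n) (Fin n) ℝ)).charpoly := by
          exact congrArg Matrix.charpoly hspec
      _ = (Matrix.diagonal (RCLike.ofReal ∘ hsymm.eigenvalues) :
            Matrix (Fin n) (Fin n) ℝ).charpoly := my_charpoly_conj _ _ hU
      _ = ∏ i, (X - C (hsymm.eigenvalues i)) := by rw [hdiag, my_charpoly_diagonal]
  constructor
  · -- det = 0 case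
    intro hdet0
    refine hsymm.posSemidef_iff_eigenvalues_nonneg.mpr (Pi.le_def.mpr fun i => (?_ : 0 ≤ hsymm.eigenvalues i))
    by_contra hneg
    push_neg at hneg
    have hpos : ∀ j, j ≠ i → 0 < hsymm.eigenvalues j := fun j hj =>
      key (Ne.symm hj) hneg
    have : A.det ≠ 0 := by
      rw [hdetprod, ← Finset.mul_prod_erase Finset.univ _ (Finset.mem_univ i)]
      have h1 : 0 < ∏ j ∈ Finset.univ.erase i, hsymm.eigenvalues j :=
        Finset.prod_pos fun j hj => hpos j (Finset.mem_erase.mp hj).1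
      exact ne_of_lt (mul_neg_of_neg_of_pos hneg h1)
    exact this hdet0
  · -- det ≠ 0 case
    intro hdet0
    have hdetlt : A.det < 0 := lt_of_le_of_ne hdet hdet0
    obtain ⟨i₀, hi₀⟩ : ∃ i, hsymm.eigenvalues i < 0 := by
      by_contra hall
      push_neg at hall
      have : 0 ≤ A.det := by
        rw [hdetprod]
        exact Finset.prod_nonneg fun j _ => hall j
      linarith
    have hpos : ∀ j, j ≠ i₀ → 0 < hsymm.eigenvalues j := fun j hj =>
      key (Ne.symm hj) hi₀
    refine ⟨hsymm.eigenvalues i₀, hi₀, fun μ hμ => ?_⟩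
    have hroots : A.charpoly.roots = Finset.univ.val.map hsymm.eigenvalues := by
      rw [hcharpoly, ← Polynomial.roots_multiset_prod_X_sub_C
        (Finset.univ.val.map hsymm.eigenvalues)]
      congr 1
      rw [Multiset.map_map]
      rfl
    have hcount : A.charpoly.rootMultiplicity μ =
        (Finset.univ.val.map hsymm.eigenvalues).count μ := by
      rw [← Polynomial.count_roots, hroots]
    rw [hcount, Multiset.count_map]
    by_cases hcase : μ = hsymm.eigenvalues i₀
    · rw [if_pos hcase]
      have hfin : Finset.filter (fun a => μ = hsymm.eigenvalues a) Finset.univ = {i₀} := by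
        ext a
        simp only [Finset.mem_filter, Finset.mem_univ, true_and, Finset.mem_singleton]
        constructor
        · intro ha
          by_contra hne
          have := hpos a hne
          rw [← ha] at this
          linarith
        · intro ha
          rw [ha]
          exact hcase
      rw [← Finset.filter_val, hfin]
      rfl
    · rw [if_neg hcase]
      have hfin : Finset.filter (fun a => μ = hsymm.eigenvalues a) Finset.univ = ∅ := by
        apply Finset.filter_false_of_mem
        intro a _
        by_cases ha : a = i₀
        · rw [ha]
          exact fun h => hcase h
        · have := hpos a ha
          intro h
          rw [← h] at this
          linarith
      rw [← Finset.filter_val, hfin]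
      rfl
end

section
/- For every δ > 0 and r > 0 there exists R = R(δ, r, n) > 0 such that the following holds: let σ = C(v_1, …, v_{n+1}) be a hyperbolic n-simplex in D^n whose inradius is at least δ, let c be a center of σ (a point such that the closed hyperbolic ball of radius equal to the inradius centered at c is contained in σ), and let x ∈ σ be a point whose hyperbolic distance to each of the n+1 totally geodesic hyperplanes sp(σ_i) is at most r, where sp(σ_i) is the intersection with D^n of the affine span of {v_j : j ≠ i} and the distance from x to a set is the infimum of hyperbolic distances from x to its points. Then d(x, c) ≤ R. -/
open MeasureTheory

/-- Inverse hyperbolic cosine: `arcosh t = log (t + √(t² − 1))`. -/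
noncomputable def arcosh (t : ℝ) : ℝ := Real.log (t + Real.sqrt (t ^ 2 - 1))

/-- Hyperbolic distance between two points of the open unit ball in the projective
(Klein) model: `d(x,y) = arcosh ((1 − x·y)/√((1−|x|²)(1−|y|²)))`. -/
noncomputable def hdist (n : ℕ) (x y : EuclideanSpace ℝ (Fin n)) : ℝ :=
  arcosh ((1 - inner ℝ x y) / Real.sqrt ((1 - ‖x‖ ^ 2) * (1 - ‖y‖ ^ 2)))

/-- The closed hyperbolic ball of radius `ρ` about `c` in the Klein model. -/
noncomputable def hClosedBall (n : ℕ) (c : EuclideanSpace ℝ (Fin n)) (ρ : ℝ) :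
    Set (EuclideanSpace ℝ (Fin n)) :=
  {x | x ∈ Metric.ball (0 : EuclideanSpace ℝ (Fin n)) 1 ∧ hdist n c x ≤ ρ}

/-- The inradius of a subset of the Klein model: the supremum of radii of closed
hyperbolic balls contained in it. -/
noncomputable def inradius (n : ℕ) (σ : Set (EuclideanSpace ℝ (Fin n))) : ℝ :=
  sSup {ρ : ℝ | 0 ≤ ρ ∧ ∃ c ∈ Metric.ball (0 : EuclideanSpace ℝ (Fin n)) 1,
    hClosedBall n c ρ ⊆ σ}

/-- A center of a subset of the Klein model: a point such that the closed hyperbolic ball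
of radius the inradius about it is contained in the set. -/
def isCenter (n : ℕ) (c : EuclideanSpace ℝ (Fin n)) (σ : Set (EuclideanSpace ℝ (Fin n))) :
    Prop :=
  c ∈ Metric.ball (0 : EuclideanSpace ℝ (Fin n)) 1 ∧ hClosedBall n c (inradius n σ) ⊆ σ

/-- The hyperbolic distance from a point to a set: the infimum of the distances to its
points. -/
noncomputable def hdistSet (n : ℕ) (x : EuclideanSpace ℝ (Fin n))
    (S : Set (EuclideanSpace ℝ (Fin n))) : ℝ :=
  sInf {d : ℝ | ∃ y ∈ S, d = hdist n x y}

namespace Stmt18Aux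

/-! ### arcosh lemmas -/

lemma one_le_inner_arg {t : ℝ} (ht : 1 ≤ t) : 1 ≤ t + Real.sqrt (t ^ 2 - 1) :=
  le_add_of_le_of_nonneg ht (Real.sqrt_nonneg _)

lemma arcosh_nonneg {t : ℝ} (ht : 1 ≤ t) : 0 ≤ arcosh t :=
  Real.log_nonneg (one_le_inner_arg ht)

lemma arcosh_one : arcosh 1 = 0 := by
  simp [arcosh]

lemma arcosh_le_arcosh {s t : ℝ} (hs : 1 ≤ s) (hst : s ≤ t) : arcosh s ≤ arcosh t := by
  apply Real.log_le_log (by linarith [Real.sqrt_nonneg (s ^ 2 - 1)])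
  have h1 : s ^ 2 - 1 ≤ t ^ 2 - 1 := by nlinarith
  have := Real.sqrt_le_sqrt h1
  linarith

lemma cosh_arcosh {t : ℝ} (ht : 1 ≤ t) : Real.cosh (arcosh t) = t := by
  have h1 : (0:ℝ) ≤ t ^ 2 - 1 := by nlinarith
  have hA : 0 < t + Real.sqrt (t ^ 2 - 1) := by linarith [Real.sqrt_nonneg (t ^ 2 - 1)]
  rw [arcosh, Real.cosh_eq, Real.exp_log hA, Real.exp_neg, Real.exp_log hA]
  have hsq : Real.sqrt (t ^ 2 - 1) ^ 2 = t ^ 2 - 1 := Real.sq_sqrt h1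
  have hmul : (t + Real.sqrt (t ^ 2 - 1)) * (t - Real.sqrt (t ^ 2 - 1)) = 1 := by nlinarith [hsq]
  have hinv : (t + Real.sqrt (t ^ 2 - 1))⁻¹ = t - Real.sqrt (t ^ 2 - 1) :=
    inv_eq_of_mul_eq_one_right hmul
  rw [hinv]; ring

lemma arcosh_cosh {t : ℝ} (ht : 0 ≤ t) : arcosh (Real.cosh t) = t := by
  have h1 : Real.cosh t ^ 2 - 1 = Real.sinh t ^ 2 := by
    have := Real.cosh_sq t; linarith
  rw [arcosh, h1, Real.sqrt_sq (Real.sinh_nonneg_iff.2 ht)]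
  rw [Real.cosh_eq, Real.sinh_eq]
  have h2 : (Real.exp t + Real.exp (-t)) / 2 + (Real.exp t - Real.exp (-t)) / 2 = Real.exp t := by
    ring
  rw [h2, Real.log_exp]

/-! ### the Minkowski form on `ℝ × E` -/

variable {n : ℕ}

local notation "E" => EuclideanSpace ℝ (Fin n)

/-- Minkowski bilinear form on `ℝ × E`. -/
noncomputable def mink (X Y : ℝ × EuclideanSpace ℝ (Fin n)) : ℝ :=
  X.1 * Y.1 - inner ℝ X.2 Y.2

lemma mink_comm (X Y : ℝ × E) : mink X Y = mink Y X := by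
  simp [mink, real_inner_comm, mul_comm]

lemma mink_add_left (A B Y : ℝ × E) : mink (A + B) Y = mink A Y + mink B Y := by
  simp only [mink, Prod.fst_add, Prod.snd_add, inner_add_left]; ring

lemma mink_smul_left (a : ℝ) (X Y : ℝ × E) : mink (a • X) Y = a * mink X Y := by
  simp only [mink, Prod.smul_fst, Prod.smul_snd, smul_eq_mul, real_inner_smul_left]; ring

lemma mink_add_right (Y A B : ℝ × E) : mink Y (A + B) = mink Y A + mink Y B := by
  rw [mink_comm, mink_add_left, mink_comm A Y, mink_comm B Y]

lemma mink_smul_right (a : ℝ) (X Y : ℝ × E) : mink X (a • Y) = a * mink X Y := by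
  rw [mink_comm, mink_smul_left, mink_comm]

lemma mink_comb2_left (a b : ℝ) (A B Y : ℝ × E) :
    mink (a • A + b • B) Y = a * mink A Y + b * mink B Y := by
  rw [mink_add_left, mink_smul_left, mink_smul_left]

lemma mink_comb2_right (a b : ℝ) (Y A B : ℝ × E) :
    mink Y (a • A + b • B) = a * mink Y A + b * mink Y B := by
  rw [mink_add_right, mink_smul_right, mink_smul_right]

lemma mink_sub_smul_left (s : ℝ) (A B Y : ℝ × E) :
    mink (A - s • B) Y = mink A Y - s * mink B Y := by
  have h : A - s • B = (1:ℝ) • A + (-s) • B := by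
    simp [sub_eq_add_neg, neg_smul]
  rw [h, mink_comb2_left]; ring

lemma mink_sub_smul_right (s : ℝ) (Y A B : ℝ × E) :
    mink Y (A - s • B) = mink Y A - s * mink Y B := by
  rw [mink_comm, mink_sub_smul_left, mink_comm A Y, mink_comm B Y]

/-- `mink` as a bilinear map. -/
noncomputable def minkL : (ℝ × EuclideanSpace ℝ (Fin n)) →ₗ[ℝ]
    (ℝ × EuclideanSpace ℝ (Fin n)) →ₗ[ℝ] ℝ :=
  LinearMap.mk₂ ℝ mink
    (fun X X' Y => by rw [mink_add_left])
    (fun a X Y => by rw [mink_smul_left]; rfl)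
    (fun X Y Y' => by rw [mink_add_right])
    (fun a X Y => by rw [mink_smul_right]; rfl)

@[simp] lemma minkL_apply (X Y : ℝ × E) : minkL X Y = mink X Y := rfl

lemma mink_sum_left {ι : Type*} (s : Finset ι) (A : ι → ℝ × E) (Y : ℝ × E) :
    mink (∑ j ∈ s, A j) Y = ∑ j ∈ s, mink (A j) Y := by
  calc mink (∑ j ∈ s, A j) Y = minkL (∑ j ∈ s, A j) Y := rfl
    _ = (∑ j ∈ s, minkL (A j)) Y := by rw [map_sum]
    _ = ∑ j ∈ s, minkL (A j) Y := LinearMap.sum_apply _ _ _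
    _ = ∑ j ∈ s, mink (A j) Y := rfl

lemma inner_self_lt_of_timelike {Y : ℝ × E} (hY : 0 < mink Y Y) :
    (inner ℝ Y.2 Y.2 : ℝ) < Y.1 ^ 2 := by rw [mink] at hY; nlinarith

/-- perp of a timelike vector is nonpositive -/
lemma mink_perp_nonpos {Y Z : ℝ × E} (hY : 0 < mink Y Y) (hperp : mink Y Z = 0) :
    mink Z Z ≤ 0 := by
  have h3 := inner_self_lt_of_timelike hY
  have hp : (0:ℝ) < Y.1 ^ 2 := lt_of_le_of_lt real_inner_self_nonneg h3
  have h1 : Y.1 * Z.1 = inner ℝ Y.2 Z.2 := by rw [mink] at hperp; linarith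
  have hcs := real_inner_mul_inner_self_le (Y.2) (Z.2)
  have h4 : (0:ℝ) ≤ inner ℝ Z.2 Z.2 := real_inner_self_nonneg
  have h2 : Y.1 ^ 2 * Z.1 ^ 2 ≤ inner ℝ Y.2 Y.2 * inner ℝ Z.2 Z.2 := by
    have he : Y.1 ^ 2 * Z.1 ^ 2 = (Y.1 * Z.1) * (Y.1 * Z.1) := by ring
    rw [he, h1]; exact hcs
  have h5 : (inner ℝ Y.2 Y.2 : ℝ) * inner ℝ Z.2 Z.2 ≤ Y.1 ^ 2 * inner ℝ Z.2 Z.2 :=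
    mul_le_mul_of_nonneg_right (le_of_lt h3) h4
  have h6 : Z.1 ^ 2 ≤ inner ℝ Z.2 Z.2 := le_of_mul_le_mul_left (by linarith) hp
  rw [mink]; nlinarith

lemma mink_perp_neg {Y Z : ℝ × E} (hY : 0 < mink Y Y) (hperp : mink Y Z = 0)
    (hZ : Z ≠ 0) : mink Z Z < 0 := by
  have h3 := inner_self_lt_of_timelike hY
  have hp : (0:ℝ) < Y.1 ^ 2 := lt_of_le_of_lt real_inner_self_nonneg h3
  have ht : Y.1 ≠ 0 := fun h => by rw [h] at hp; simp at hp
  have h1 : Y.1 * Z.1 = inner ℝ Y.2 Z.2 := by rw [mink] at hperp; linarith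
  by_cases hw : Z.2 = 0
  · exfalso
    apply hZ
    have h0 : Z.1 = 0 := by
      have : Y.1 * Z.1 = 0 := by rw [h1, hw, inner_zero_right]
      exact (mul_eq_zero.1 this).resolve_left ht
    exact Prod.ext h0 hw
  · have h4 : (0:ℝ) < inner ℝ Z.2 Z.2 := by
      rcases lt_or_eq_of_le (real_inner_self_nonneg (x := Z.2)) with h | h
      · exact h
      · exact absurd (inner_self_eq_zero.1 h.symm) hw
    have hcs := real_inner_mul_inner_self_le (Y.2) (Z.2)
    have h2 : Y.1 ^ 2 * Z.1 ^ 2 ≤ inner ℝ Y.2 Y.2 * inner ℝ Z.2 Z.2 := by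
      have he : Y.1 ^ 2 * Z.1 ^ 2 = (Y.1 * Z.1) * (Y.1 * Z.1) := by ring
      rw [he, h1]; exact hcs
    have h5 : (inner ℝ Y.2 Y.2 : ℝ) * inner ℝ Z.2 Z.2 < Y.1 ^ 2 * inner ℝ Z.2 Z.2 :=
      mul_lt_mul_of_pos_right h3 h4
    have h6 : Z.1 ^ 2 < inner ℝ Z.2 Z.2 := lt_of_mul_lt_mul_left (by linarith) (le_of_lt hp)
    rw [mink]; nlinarith

/-- two unit timelike vectors with positive pairing: same time orientation -/
lemma mink_same_sheet {A B : ℝ × E} (hA : mink A A = 1) (hB : mink B B = 1)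
    (hA1 : 0 < A.1) (hAB : 0 < mink A B) : 0 < B.1 := by
  by_contra h
  push_neg at h
  have hcs := abs_real_inner_le_norm (A.2) (B.2)
  have hA2 : ‖A.2‖ ^ 2 = A.1 ^ 2 - 1 := by
    rw [mink, real_inner_self_eq_norm_sq] at hA; nlinarith
  have hB2 : ‖B.2‖ ^ 2 = B.1 ^ 2 - 1 := by
    rw [mink, real_inner_self_eq_norm_sq] at hB; nlinarith
  have hnA : ‖A.2‖ < A.1 := by nlinarith [norm_nonneg (A.2)]
  have hnB : ‖B.2‖ < -B.1 := by nlinarith [norm_nonneg (B.2)]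
  have hneg : mink A B < 0 := by
    rw [mink]
    have h2 : (inner ℝ A.2 B.2 : ℝ) ≥ -(‖A.2‖ * ‖B.2‖) := by
      have := abs_le.1 hcs; linarith [this.1]
    nlinarith [norm_nonneg (A.2), norm_nonneg (B.2)]
  linarith

/-- sinh-distance point-to-hyperplane vs point-to-point inequality. -/
lemma sq_mink_le {P Y eh : ℝ × E} (hP : mink P P = 1) (hY : mink Y Y = 1)
    (heh : mink eh eh = -1) (hperp : mink Y eh = 0) :
    (mink P eh) ^ 2 ≤ (mink P Y) ^ 2 - 1 := by
  set p := mink P Y with hp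
  set a := mink P eh with ha
  set Z := P - p • Y + a • eh with hZ
  have hZY : mink Y Z = 0 := by
    rw [hZ, mink_add_right, mink_sub_smul_right, mink_smul_right, mink_comm Y P, hY, hperp]
    ring
  have hZZ : mink Z Z ≤ 0 := mink_perp_nonpos (by rw [hY]; norm_num) hZY
  have hcalc : mink Z Z = 1 - p ^ 2 + a ^ 2 := by
    rw [hZ]
    simp only [mink_add_left, mink_add_right, mink_sub_smul_left, mink_sub_smul_right,
      mink_smul_left, mink_smul_right]
    rw [hP, hY, heh, mink_comm Y P, mink_comm eh P, mink_comm eh Y, hperp, ← hp, ← ha]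
    ring
  nlinarith [hZZ, hcalc]

set_option maxHeartbeats 1000000 in
/-- pushing the center across a nearby hyperplane. -/
lemma exists_push (C eh : ℝ × E) (δ : ℝ) (hδ : 0 < δ) (hC : mink C C = 1)
    (hC1 : 0 < C.1) (heh : mink eh eh = -1) (hs : mink C eh < Real.sinh δ) :
    ∃ Y : ℝ × E, mink Y Y = 1 ∧ 0 < Y.1 ∧ mink C Y = Real.cosh δ ∧ mink Y eh < 0 := by
  set s := mink C eh with hsdef
  set l := Real.sqrt (1 + s ^ 2) with hl
  have hl2 : l ^ 2 = 1 + s ^ 2 := Real.sq_sqrt (by positivity)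
  have hlpos : 0 < l := Real.sqrt_pos.2 (by positivity)
  set u : ℝ × EuclideanSpace ℝ (Fin n) := l⁻¹ • (eh - s • C) with hu
  have hCu : mink C u = 0 := by
    rw [hu, mink_smul_right, mink_sub_smul_right, hC, ← hsdef]; ring
  have huu : mink u u = -1 := by
    rw [hu]
    simp only [mink_smul_left, mink_smul_right, mink_sub_smul_left, mink_sub_smul_right]
    rw [heh, hC, mink_comm eh C, ← hsdef]
    field_simp
    nlinarith [hl2]
  have hueh : mink u eh = -l := by
    rw [hu]
    simp only [mink_smul_left, mink_sub_smul_left]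
    rw [heh, ← hsdef]
    have h0 : -1 - s * s = -(l ^ 2) := by nlinarith [hl2]
    rw [h0]
    field_simp
  refine ⟨Real.cosh δ • C + Real.sinh δ • u, ?_, ?_, ?_, ?_⟩
  · rw [mink_comb2_left, mink_comb2_right, mink_comb2_right, hC, huu, hCu, mink_comm u C, hCu]
    have := Real.cosh_sq_sub_sinh_sq δ
    nlinarith [this]
  · have hm : mink C (Real.cosh δ • C + Real.sinh δ • u) = Real.cosh δ := by
      rw [mink_comb2_right, hC, hCu]; ring
    refine mink_same_sheet hC ?_ hC1 (by rw [hm]; exact Real.cosh_pos δ)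
    rw [mink_comb2_left, mink_comb2_right, mink_comb2_right, hC, huu, hCu, mink_comm u C, hCu]
    have := Real.cosh_sq_sub_sinh_sq δ
    nlinarith [this]
  · rw [mink_comb2_right, hC, hCu]; ring
  · rw [mink_comb2_left, ← hsdef, hueh]
    have hsh : 0 < Real.sinh δ := Real.sinh_pos_iff.2 hδ
    have hch : 0 < Real.cosh δ := Real.cosh_pos δ
    have hch2 : Real.cosh δ ^ 2 = 1 + Real.sinh δ ^ 2 := by
      have := Real.cosh_sq_sub_sinh_sq δ; nlinarith
    rcases le_or_gt s 0 with h | h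
    · have h1 : Real.cosh δ * s ≤ 0 := mul_nonpos_of_nonneg_of_nonpos (le_of_lt hch) h
      have h2 : 0 < Real.sinh δ * l := mul_pos hsh hlpos
      linarith
    · have key : (s * Real.cosh δ) ^ 2 < (Real.sinh δ * l) ^ 2 := by
        have e1 : (Real.sinh δ * l) ^ 2 = Real.sinh δ ^ 2 * (1 + s ^ 2) := by
          rw [mul_pow, hl2]
        have e2 : (s * Real.cosh δ) ^ 2 = s ^ 2 * (1 + Real.sinh δ ^ 2) := by
          rw [mul_pow, hch2]
        rw [e1, e2]
        nlinarith [hs, h]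
      have hpos : 0 ≤ Real.sinh δ * l := le_of_lt (mul_pos hsh hlpos)
      have := lt_of_pow_lt_pow_left₀ 2 hpos key
      linarith

/-! ### lifts to the hyperboloid -/

noncomputable def wgt (z : EuclideanSpace ℝ (Fin n)) : ℝ := Real.sqrt (1 - ‖z‖ ^ 2)

noncomputable def nlift (z : EuclideanSpace ℝ (Fin n)) : ℝ × EuclideanSpace ℝ (Fin n) :=
  (wgt z)⁻¹ • ((1 : ℝ), z)

lemma ball_mem_iff {z : E} : z ∈ Metric.ball (0 : E) 1 ↔ ‖z‖ < 1 := by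
  simp [Metric.mem_ball, dist_eq_norm]

lemma one_sub_sq_pos {z : E} (hz : ‖z‖ < 1) : 0 < 1 - ‖z‖ ^ 2 := by
  nlinarith [norm_nonneg z]

lemma wgt_pos {z : E} (hz : ‖z‖ < 1) : 0 < wgt z := Real.sqrt_pos.2 (one_sub_sq_pos hz)

lemma wgt_sq {z : E} (hz : ‖z‖ < 1) : wgt z ^ 2 = 1 - ‖z‖ ^ 2 :=
  Real.sq_sqrt (le_of_lt (one_sub_sq_pos hz))

lemma mink_nlift (x y : E) (hx : ‖x‖ < 1) :
    mink (nlift x) (nlift y) = (1 - inner ℝ x y) / Real.sqrt ((1 - ‖x‖ ^ 2) * (1 - ‖y‖ ^ 2)) := by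
  rw [nlift, nlift, mink_smul_left, mink_smul_right]
  rw [Real.sqrt_mul (le_of_lt (one_sub_sq_pos hx))]
  rw [show mink ((1:ℝ), x) ((1:ℝ), y) = 1 - inner ℝ x y by simp [mink]]
  rw [div_eq_mul_inv, mul_inv]
  rw [wgt, wgt]
  ring

lemma hdist_eq (x y : E) (hx : ‖x‖ < 1) :
    hdist n x y = arcosh (mink (nlift x) (nlift y)) := by
  rw [hdist, mink_nlift x y hx]

lemma mink_nlift_self {z : E} (hz : ‖z‖ < 1) : mink (nlift z) (nlift z) = 1 := by
  rw [mink_nlift z z hz, real_inner_self_eq_norm_sq]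
  rw [Real.sqrt_mul_self (le_of_lt (one_sub_sq_pos hz))]
  rw [div_self (ne_of_gt (one_sub_sq_pos hz))]

lemma nlift_fst_pos {z : E} (hz : ‖z‖ < 1) : 0 < (nlift z).1 := by
  rw [nlift]
  simp only [Prod.smul_fst, smul_eq_mul, mul_one]
  exact inv_pos.2 (wgt_pos hz)

lemma one_le_mink_nlift {x y : E} (hx : ‖x‖ < 1) (hy : ‖y‖ < 1) :
    1 ≤ mink (nlift x) (nlift y) := by
  rw [mink_nlift x y hx]
  rw [le_div_iff₀ (Real.sqrt_pos.2 (mul_pos (one_sub_sq_pos hx) (one_sub_sq_pos hy)))]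
  have h1 : (inner ℝ x y : ℝ) ≤ ‖x‖ * ‖y‖ := real_inner_le_norm x y
  have h2 : Real.sqrt ((1 - ‖x‖ ^ 2) * (1 - ‖y‖ ^ 2)) ≤ 1 - ‖x‖ * ‖y‖ := by
    rw [show (1 - ‖x‖ ^ 2) * (1 - ‖y‖ ^ 2) = (1 - ‖x‖ * ‖y‖)^2 - (‖x‖ - ‖y‖)^2 by ring]
    calc Real.sqrt ((1 - ‖x‖ * ‖y‖) ^ 2 - (‖x‖ - ‖y‖) ^ 2)
        ≤ Real.sqrt ((1 - ‖x‖ * ‖y‖) ^ 2) :=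
          Real.sqrt_le_sqrt (by nlinarith [sq_nonneg (‖x‖ - ‖y‖)])
      _ = |1 - ‖x‖ * ‖y‖| := Real.sqrt_sq_eq_abs _
      _ = 1 - ‖x‖ * ‖y‖ := abs_of_pos (by nlinarith [norm_nonneg x, norm_nonneg y])
  calc 1 * Real.sqrt ((1 - ‖x‖ ^ 2) * (1 - ‖y‖ ^ 2)) ≤ 1 - ‖x‖ * ‖y‖ := by
        rw [one_mul]; exact h2
    _ ≤ 1 - inner ℝ x y := by linarith

/-- recovering a ball point from a future unit timelike vector -/
lemma exists_point_of_unit {Y : ℝ × EuclideanSpace ℝ (Fin n)} (hY : mink Y Y = 1)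
    (hY1 : 0 < Y.1) : ∃ y : EuclideanSpace ℝ (Fin n), ‖y‖ < 1 ∧ nlift y = Y := by
  refine ⟨(Y.1)⁻¹ • Y.2, ?_, ?_⟩
  · have h2 : ‖Y.2‖ ^ 2 = Y.1 ^ 2 - 1 := by
      rw [mink, real_inner_self_eq_norm_sq] at hY; nlinarith
    rw [norm_smul]
    have h3 : |Y.1⁻¹| = (Y.1)⁻¹ := abs_of_pos (inv_pos.2 hY1)
    rw [Real.norm_eq_abs, h3]
    rw [show (1:ℝ) = Y.1⁻¹ * Y.1 by field_simp]
    apply mul_lt_mul_of_pos_left _ (inv_pos.2 hY1)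
    nlinarith [norm_nonneg Y.2]
  · have h2 : ‖Y.2‖ ^ 2 = Y.1 ^ 2 - 1 := by
      rw [mink, real_inner_self_eq_norm_sq] at hY; nlinarith
    have hY1' : Y.1 ≠ 0 := ne_of_gt hY1
    have hnorm : 1 - ‖(Y.1)⁻¹ • Y.2‖ ^ 2 = ((Y.1)⁻¹) ^ 2 := by
      rw [norm_smul, Real.norm_eq_abs, mul_pow, sq_abs, h2]
      field_simp
      ring
    have hwgt : wgt ((Y.1)⁻¹ • Y.2) = (Y.1)⁻¹ := by
      rw [wgt, hnorm, Real.sqrt_sq (le_of_lt (inv_pos.2 hY1))]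
    rw [nlift, hwgt, inv_inv]
    apply Prod.ext
    · simp
    · simp only [Prod.smul_snd, Prod.smul_fst]
      rw [smul_smul]
      rw [mul_inv_cancel₀ hY1', one_smul]

section ChunkDev
variable {n : ℕ}

lemma lift_linearIndependent (v : Fin (n + 1) → EuclideanSpace ℝ (Fin n))
    (hind : AffineIndependent ℝ v) :
    LinearIndependent ℝ (fun i : Fin (n + 1) => ((1 : ℝ), v i)) := by
  rw [Fintype.linearIndependent_iff]
  intro g hg
  have h1 : ∑ i, g i = 0 := by
    have h := congrArg (⇑(LinearMap.fst ℝ ℝ (EuclideanSpace ℝ (Fin n)))) hg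
    simp only [map_sum, _root_.map_smul, LinearMap.fst_apply, Prod.smul_fst, smul_eq_mul, mul_one,
      map_zero] at h
    exact h
  have h2 : ∑ i, g i • v i = 0 := by
    have h := congrArg (⇑(LinearMap.snd ℝ ℝ (EuclideanSpace ℝ (Fin n)))) hg
    simp only [map_sum, _root_.map_smul, LinearMap.snd_apply, Prod.smul_snd, map_zero] at h
    exact h
  exact fun i => affineIndependent_iff.1 hind Finset.univ g h1 h2 i (Finset.mem_univ i)

lemma lift_card_eq :
    Fintype.card (Fin (n + 1)) = Module.finrank ℝ (ℝ × EuclideanSpace ℝ (Fin n)) := by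
  rw [Module.finrank_prod, finrank_euclideanSpace_fin, Module.finrank_self, Fintype.card_fin]
  omega

lemma exists_j_ne (hn : 1 ≤ n) (i : Fin (n + 1)) : ∃ j0 : Fin (n + 1), j0 ≠ i := by
  by_cases h : i = ⟨0, Nat.succ_pos n⟩
  · exact ⟨⟨1, by omega⟩, by rw [h]; exact Fin.ne_of_val_ne (by norm_num)⟩
  · exact ⟨⟨0, Nat.succ_pos n⟩, fun hc => h (hc ▸ rfl)⟩

lemma mink_lift_self_pos {z : EuclideanSpace ℝ (Fin n)} (hz : ‖z‖ < 1) :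
    0 < mink ((1 : ℝ), z) ((1 : ℝ), z) := by
  have h : mink ((1 : ℝ), z) ((1 : ℝ), z) = 1 - ‖z‖ ^ 2 := by
    simp only [mink]
    rw [real_inner_self_eq_norm_sq]; ring
  rw [h]; exact one_sub_sq_pos hz

lemma exists_normal (hn : 1 ≤ n) (v : Fin (n + 1) → EuclideanSpace ℝ (Fin n))
    (hv : ∀ i, ‖v i‖ < 1) (hind : AffineIndependent ℝ v) (i : Fin (n + 1)) :
    ∃ eh : ℝ × EuclideanSpace ℝ (Fin n), mink eh eh = -1 ∧
      (∀ j, j ≠ i → mink ((1 : ℝ), v j) eh = 0) ∧ 0 < mink ((1 : ℝ), v i) eh := by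
  classical
  set u : Fin (n + 1) → ℝ × EuclideanSpace ℝ (Fin n) := fun j => ((1 : ℝ), v j) with hu
  have hli := lift_linearIndependent v hind
  let B : Module.Basis (Fin (n + 1)) ℝ (ℝ × EuclideanSpace ℝ (Fin n)) :=
    basisOfLinearIndependentOfCardEqFinrank hli lift_card_eq
  have hB : ∀ j, B j = u j := fun j => by
    rw [show B = basisOfLinearIndependentOfCardEqFinrank hli lift_card_eq from rfl,
      coe_basisOfLinearIndependentOfCardEqFinrank]
  let T : (ℝ × EuclideanSpace ℝ (Fin n)) →ₗ[ℝ] ({j : Fin (n + 1) // j ≠ i} → ℝ) :=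
    LinearMap.pi fun j => minkL (u j)
  have hnotinj : ¬Function.Injective T := by
    intro h
    have hle := LinearMap.finrank_le_finrank_of_injective h
    have h1 : Module.finrank ℝ ({j : Fin (n + 1) // j ≠ i} → ℝ) = n := by
      rw [Module.finrank_pi]
      have : Fintype.card {j : Fin (n + 1) // j ≠ i} = n := by
        have hc := Fintype.card_subtype_compl (fun j : Fin (n + 1) => j = i)
        simp only [Fintype.card_subtype_eq, Fintype.card_fin] at hc
        simpa using hc
      exact this
    rw [h1, ← lift_card_eq, Fintype.card_fin] at hle
    omega
  have hker : LinearMap.ker T ≠ ⊥ := by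
    rwa [ne_eq, LinearMap.ker_eq_bot]
  obtain ⟨e, heker, he0⟩ := (Submodule.ne_bot_iff _).1 hker
  have hkerj : ∀ j, j ≠ i → mink (u j) e = 0 := by
    intro j hj
    have h := congrFun (LinearMap.mem_ker.1 heker) ⟨j, hj⟩
    simpa [T] using h
  obtain ⟨j0, hj0⟩ := exists_j_ne hn i
  have hee : mink e e < 0 := mink_perp_neg (mink_lift_self_pos (hv j0)) (hkerj j0 hj0) he0
  have hm0 : mink (u i) e ≠ 0 := by
    intro h0
    have hall : ∀ j, mink (u j) e = 0 := by
      intro j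
      by_cases hj : j = i
      · rw [hj]; exact h0
      · exact hkerj j hj
    have hze : mink e e = 0 := by
      nth_rewrite 1 [← B.sum_repr e]
      rw [mink_sum_left]
      apply Finset.sum_eq_zero
      intro j _
      rw [hB, mink_smul_left, hall, mul_zero]
    linarith
  set q := mink e e with hq
  have hqneg : q < 0 := hee
  have hsqp : 0 < Real.sqrt (-q) := Real.sqrt_pos.2 (by linarith)
  have hsq : Real.sqrt (-q) * Real.sqrt (-q) = -q := Real.mul_self_sqrt (by linarith)
  set sgn : ℝ := if 0 < mink (u i) e then 1 else -1 with hsgn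
  have hsgn2 : sgn * sgn = 1 := by
    rw [hsgn]; split <;> norm_num
  refine ⟨(sgn * (Real.sqrt (-q))⁻¹) • e, ?_, ?_, ?_⟩
  · rw [mink_smul_left, mink_smul_right, ← hq]
    have h1 : (Real.sqrt (-q))⁻¹ * (Real.sqrt (-q))⁻¹ = (-q)⁻¹ := by
      rw [← mul_inv, hsq]
    have : sgn * (Real.sqrt (-q))⁻¹ * (sgn * (Real.sqrt (-q))⁻¹ * q) =
        (sgn * sgn) * ((Real.sqrt (-q))⁻¹ * (Real.sqrt (-q))⁻¹) * q := by ring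
    rw [this, hsgn2, h1, one_mul]
    rw [show (-q)⁻¹ * q = q / -q by ring, div_neg, div_self (ne_of_lt hqneg)]
  · intro j hj
    rw [mink_comm, mink_smul_left, mink_comm e (u j), hkerj j hj, mul_zero]
  · rw [mink_comm, mink_smul_left, mink_comm e (u i)]
    rcases lt_trichotomy (mink (u i) e) 0 with h | h | h
    · rw [hsgn, if_neg (by linarith)]
      have : (0:ℝ) < (Real.sqrt (-q))⁻¹ * (-(mink (u i) e)) :=
        mul_pos (inv_pos.2 hsqp) (by linarith)
      nlinarith
    · exact absurd h hm0
    · rw [hsgn, if_pos h]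
      have : (0:ℝ) < (Real.sqrt (-q))⁻¹ * mink (u i) e := mul_pos (inv_pos.2 hsqp) h
      nlinarith

lemma halfspace_of_normal (v : Fin (n + 1) → EuclideanSpace ℝ (Fin n))
    (eh : ℝ × EuclideanSpace ℝ (Fin n)) (i : Fin (n + 1))
    (h0 : ∀ j, j ≠ i → mink ((1 : ℝ), v j) eh = 0)
    (hpos : 0 < mink ((1 : ℝ), v i) eh) :
    ∀ z ∈ convexHull ℝ (Set.range v), 0 ≤ mink ((1 : ℝ), z) eh := by
  intro z hz
  have hset : {w : EuclideanSpace ℝ (Fin n) | 0 ≤ mink ((1 : ℝ), w) eh} =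
      {w : EuclideanSpace ℝ (Fin n) | (inner ℝ eh.2 w : ℝ) ≤ eh.1} := by
    ext w
    simp only [Set.mem_setOf_eq, mink]
    rw [real_inner_comm]
    constructor <;> intro <;> linarith
  have hconv : Convex ℝ {w : EuclideanSpace ℝ (Fin n) | 0 ≤ mink ((1 : ℝ), w) eh} := by
    rw [hset]
    exact convex_halfSpace_le
      ⟨fun a b => inner_add_right _ _ _, fun cc a => by
        rw [real_inner_smul_right]; rfl⟩ _
  refine convexHull_min ?_ hconv hz
  rintro w ⟨j, rfl⟩
  by_cases hj : j = i
  · rw [hj]; exact le_of_lt hpos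
  · rw [Set.mem_setOf_eq, h0 j hj]

lemma span_zero_of_normal (v : Fin (n + 1) → EuclideanSpace ℝ (Fin n))
    (eh : ℝ × EuclideanSpace ℝ (Fin n)) (i : Fin (n + 1))
    (h0 : ∀ j, j ≠ i → mink ((1 : ℝ), v j) eh = 0) :
    ∀ y ∈ (affineSpan ℝ (Set.range fun j : {j : Fin (n + 1) // j ≠ i} => v j) :
      Set (EuclideanSpace ℝ (Fin n))), mink ((1 : ℝ), y) eh = 0 := by
  set L : EuclideanSpace ℝ (Fin n) →ₗ[ℝ] ℝ :=
    { toFun := fun w => -(inner ℝ eh.2 w : ℝ)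
      map_add' := fun a b => by
        show -(inner ℝ eh.2 (a + b) : ℝ) = -(inner ℝ eh.2 a : ℝ) + -(inner ℝ eh.2 b : ℝ)
        rw [inner_add_right]; ring
      map_smul' := fun cc a => by
        show -(inner ℝ eh.2 (cc • a) : ℝ) = (RingHom.id ℝ) cc • -(inner ℝ eh.2 a : ℝ)
        rw [real_inner_smul_right, RingHom.id_apply, smul_eq_mul]; ring } with hL
  set f : EuclideanSpace ℝ (Fin n) →ᵃ[ℝ] ℝ :=
    { toFun := fun w => mink ((1 : ℝ), w) eh
      linear := L
      map_vadd' := fun p w => by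
        show mink ((1 : ℝ), w +ᵥ p) eh = L w +ᵥ mink ((1 : ℝ), p) eh
        simp only [mink, hL, LinearMap.coe_mk, AddHom.coe_mk, vadd_eq_add, inner_add_left]
        rw [real_inner_comm eh.2 w]
        ring } with hf
  have hle : affineSpan ℝ (Set.range fun j : {j : Fin (n + 1) // j ≠ i} => v j) ≤
      AffineSubspace.comap f (AffineSubspace.mk' (0 : ℝ) ⊥) := by
    rw [affineSpan_le]
    rintro w ⟨j, rfl⟩
    show f (v j) ∈ AffineSubspace.mk' (0 : ℝ) (⊥ : Submodule ℝ ℝ)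
    rw [AffineSubspace.mem_mk']
    have : f (v j) = 0 := h0 j j.2
    simp [this]
  intro y hy
  have h2 : y ∈ AffineSubspace.comap f (AffineSubspace.mk' (0 : ℝ) ⊥) := hle hy
  rw [AffineSubspace.mem_comap, AffineSubspace.mem_mk'] at h2
  simp at h2
  exact h2

end ChunkDev

end Stmt18Aux

/-- Lemma 4.3: for every `δ, r > 0` there is `R` such that for every hyperbolic
`n`-simplex `σ` of inradius at least `δ` with center `c`, every point `x ∈ σ` within
hyperbolic distance `r` from each of the `n+1` totally geodesic hyperplanes spanned by
the codimension-1 faces satisfies `d(x, c) ≤ R`. -/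
theorem stmt18 (n : ℕ) (δ r : ℝ) (hδ : 0 < δ) (hr : 0 < r) :
    ∃ R : ℝ, 0 < R ∧
      ∀ v : Fin (n + 1) → EuclideanSpace ℝ (Fin n),
        (∀ i, v i ∈ Metric.ball (0 : EuclideanSpace ℝ (Fin n)) 1) →
        AffineIndependent ℝ v →
        δ ≤ inradius n (convexHull ℝ (Set.range v)) →
        ∀ c, isCenter n c (convexHull ℝ (Set.range v)) →
        ∀ x ∈ convexHull ℝ (Set.range v),
          (∀ i : Fin (n + 1),
            hdistSet n x
              ((affineSpan ℝ (Set.range fun j : {j : Fin (n + 1) // j ≠ i} => v j) :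
                  Set (EuclideanSpace ℝ (Fin n))) ∩
                Metric.ball (0 : EuclideanSpace ℝ (Fin n)) 1) ≤ r) →
          hdist n x c ≤ R := by
  classical
  open Stmt18Aux in
  set K : ℝ := Real.sinh (r + 1) / Real.sinh δ with hK
  refine ⟨max (arcosh K) 0 + 1, by
    have h := le_max_right (arcosh K) (0:ℝ); linarith, ?_⟩
  intro v hvball hind hinrad c hcen x hxσ hxdist
  rcases Nat.eq_zero_or_pos n with hn0 | hn
  · -- degenerate case: in dimension 0 the inradius is 0, contradicting δ ≤ inradius
    subst hn0
    exfalso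
    have hallz : ∀ z : EuclideanSpace ℝ (Fin 0), z = 0 := fun z => by ext i; exact i.elim0
    have hv0 : v 0 ∈ convexHull ℝ (Set.range v) := subset_convexHull ℝ _ ⟨0, rfl⟩
    have hsub : ∀ ρ : ℝ, 0 ≤ ρ → ρ ∈ {ρ : ℝ | 0 ≤ ρ ∧
        ∃ c ∈ Metric.ball (0 : EuclideanSpace ℝ (Fin 0)) 1,
          hClosedBall 0 c ρ ⊆ convexHull ℝ (Set.range v)} := by
      intro ρ hρ
      refine ⟨hρ, 0, Metric.mem_ball_self one_pos, ?_⟩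
      intro z _
      have hz : z = v 0 := (hallz z).trans (hallz (v 0)).symm
      rw [hz]; exact hv0
    have hnb : ¬BddAbove {ρ : ℝ | 0 ≤ ρ ∧
        ∃ c ∈ Metric.ball (0 : EuclideanSpace ℝ (Fin 0)) 1,
          hClosedBall 0 c ρ ⊆ convexHull ℝ (Set.range v)} := by
      rintro ⟨M, hM⟩
      have h1 := hM (hsub (max M 0 + 1) (by
        have := le_max_right M 0; linarith))
      have h2 := le_max_left M 0
      linarith
    have hzero : inradius 0 (convexHull ℝ (Set.range v)) = 0 := by
      rw [inradius]
      exact Real.sSup_of_not_bddAbove hnb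
    rw [hzero] at hinrad
    linarith
  · have hn1 : 1 ≤ n := hn
    have hv : ∀ i, ‖v i‖ < 1 := fun i => ball_mem_iff.1 (hvball i)
    have hσball : convexHull ℝ (Set.range v) ⊆ Metric.ball (0 : EuclideanSpace ℝ (Fin n)) 1 :=
      convexHull_min (by rintro w ⟨j, rfl⟩; exact hvball j) (convex_ball 0 1)
    have hx1 : ‖x‖ < 1 := ball_mem_iff.1 (hσball hxσ)
    have hc1 : ‖c‖ < 1 := ball_mem_iff.1 hcen.1
    have hinr_pos : 0 < inradius n (convexHull ℝ (Set.range v)) := lt_of_lt_of_le hδ hinrad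
    -- the normal vectors
    choose eh heh1 heh2 heh3 using exists_normal hn1 v hv hind
    have hhalf : ∀ i, ∀ z ∈ convexHull ℝ (Set.range v), 0 ≤ mink ((1:ℝ), z) (eh i) :=
      fun i => halfspace_of_normal v (eh i) i (heh2 i) (heh3 i)
    have hnl : ∀ (z : EuclideanSpace ℝ (Fin n)) (Y : ℝ × EuclideanSpace ℝ (Fin n)),
        mink (nlift z) Y = (wgt z)⁻¹ * mink ((1:ℝ), z) Y := fun z Y => by
      rw [nlift, mink_smul_left]
    have hsinhδ : 0 < Real.sinh δ := Real.sinh_pos_iff.2 hδ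
    have hKpos : 0 < K := by
      rw [hK]
      exact div_pos (Real.sinh_pos_iff.2 (by linarith)) hsinhδ
    -- the center is far from every wall
    have hγ : ∀ i, Real.sinh δ ≤ mink (nlift c) (eh i) := by
      intro i
      by_contra hlt
      push_neg at hlt
      obtain ⟨Y, hY1, hY2, hY3, hY4⟩ := exists_push (nlift c) (eh i) δ hδ
        (mink_nlift_self hc1) (nlift_fst_pos hc1) (heh1 i) hlt
      obtain ⟨y, hy1, hy2⟩ := exists_point_of_unit hY1 hY2
      have hdcy : hdist n c y = δ := by
        rw [hdist_eq c y hc1, hy2, hY3, arcosh_cosh (le_of_lt hδ)]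
      have hyσ : y ∈ convexHull ℝ (Set.range v) := by
        apply hcen.2
        exact ⟨ball_mem_iff.2 hy1, by rw [hdcy]; exact hinrad⟩
      have h1 : 0 ≤ mink ((1:ℝ), y) (eh i) := hhalf i y hyσ
      have h3 : mink (nlift y) (eh i) < 0 := by rw [hy2]; exact hY4
      rw [hnl y (eh i)] at h3
      have h4 : 0 ≤ (wgt y)⁻¹ * mink ((1:ℝ), y) (eh i) :=
        mul_nonneg (le_of_lt (inv_pos.2 (wgt_pos hy1))) h1
      linarith
    -- x is close to every wall
    have hxcoord : ∀ i, mink (nlift x) (eh i) ≤ Real.sinh (r + 1) := by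
      intro i
      have hxi := hxdist i
      rw [hdistSet] at hxi
      have hne : {d : ℝ | ∃ y ∈ (affineSpan ℝ
          (Set.range fun j : {j : Fin (n + 1) // j ≠ i} => v j) :
            Set (EuclideanSpace ℝ (Fin n))) ∩
          Metric.ball (0 : EuclideanSpace ℝ (Fin n)) 1, d = hdist n x y}.Nonempty := by
        obtain ⟨j0, hj0⟩ := exists_j_ne hn1 i
        refine ⟨hdist n x (v j0), v j0, ⟨?_, hvball j0⟩, rfl⟩
        exact subset_affineSpan ℝ _ ⟨⟨j0, hj0⟩, rfl⟩
      obtain ⟨d, hdmem, hd⟩ := Real.lt_sInf_add_pos hne one_pos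
      obtain ⟨y, hyS, rfl⟩ := hdmem
      have hdxy : hdist n x y < r + 1 := by linarith
      have hy1 : ‖y‖ < 1 := ball_mem_iff.1 hyS.2
      have hyspan := span_zero_of_normal v (eh i) i (heh2 i) y hyS.1
      have hperp : mink (nlift y) (eh i) = 0 := by
        rw [hnl y (eh i), hyspan, mul_zero]
      have hq1 : 1 ≤ mink (nlift x) (nlift y) := one_le_mink_nlift hx1 hy1
      have hqle : mink (nlift x) (nlift y) ≤ Real.cosh (r + 1) := by
        have harc : arcosh (mink (nlift x) (nlift y)) ≤ r + 1 := by
          rw [← hdist_eq x y hx1]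
          exact le_of_lt hdxy
        calc mink (nlift x) (nlift y)
            = Real.cosh (arcosh (mink (nlift x) (nlift y))) := (cosh_arcosh hq1).symm
          _ ≤ Real.cosh (r + 1) := by
              rw [Real.cosh_le_cosh, abs_of_nonneg (arcosh_nonneg hq1),
                abs_of_nonneg (by linarith : (0:ℝ) ≤ r + 1)]
              exact harc
      have hsq := sq_mink_le (mink_nlift_self hx1) (mink_nlift_self hy1) (heh1 i) hperp
      have hs : 0 ≤ Real.sinh (r + 1) := Real.sinh_nonneg_iff.2 (by linarith)
      have hc2 : Real.cosh (r + 1) ^ 2 - 1 = Real.sinh (r + 1) ^ 2 := by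
        have := Real.cosh_sq (r + 1); linarith
      nlinarith [hsq, hqle, hq1, hs, hc2,
        sq_nonneg (mink (nlift x) (eh i) - Real.sinh (r + 1)),
        sq_nonneg (mink (nlift x) (eh i) + Real.sinh (r + 1))]
    have hxnn : ∀ i, 0 ≤ mink (nlift x) (eh i) := by
      intro i
      rw [hnl x (eh i)]
      exact mul_nonneg (le_of_lt (inv_pos.2 (wgt_pos hx1))) (hhalf i x hxσ)
    -- basis expansion
    have hli := lift_linearIndependent v hind
    set B : Module.Basis (Fin (n + 1)) ℝ (ℝ × EuclideanSpace ℝ (Fin n)) :=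
      basisOfLinearIndependentOfCardEqFinrank hli lift_card_eq with hBdef
    have hB : ∀ j, B j = ((1:ℝ), v j) := fun j => by
      rw [hBdef, coe_basisOfLinearIndependentOfCardEqFinrank]
    have hXsum : nlift x = ∑ j, B.repr (nlift x) j • ((1:ℝ), v j) := by
      nth_rewrite 1 [← B.sum_repr (nlift x)]
      exact Finset.sum_congr rfl fun j _ => by rw [hB]
    have hCsum : nlift c = ∑ j, B.repr (nlift c) j • ((1:ℝ), v j) := by
      nth_rewrite 1 [← B.sum_repr (nlift c)]
      exact Finset.sum_congr rfl fun j _ => by rw [hB]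
    have hcoordx : ∀ k, mink (nlift x) (eh k) = B.repr (nlift x) k * mink ((1:ℝ), v k) (eh k) := by
      intro k
      nth_rewrite 1 [hXsum]
      rw [mink_sum_left, Finset.sum_eq_single k]
      · rw [mink_smul_left]
      · intro j _ hjk
        rw [mink_smul_left, heh2 k j hjk, mul_zero]
      · intro h; exact absurd (Finset.mem_univ k) h
    have hcoordc : ∀ k, mink (nlift c) (eh k) = B.repr (nlift c) k * mink ((1:ℝ), v k) (eh k) := by
      intro k
      nth_rewrite 1 [hCsum]
      rw [mink_sum_left, Finset.sum_eq_single k]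
      · rw [mink_smul_left]
      · intro j _ hjk
        rw [mink_smul_left, heh2 k j hjk, mul_zero]
      · intro h; exact absurd (Finset.mem_univ k) h
    have hP : ∀ k, 0 < mink ((1:ℝ), v k) (nlift c) := by
      intro k
      have hurw : ((1:ℝ), v k) = wgt (v k) • nlift (v k) := by
        rw [nlift, smul_smul, mul_inv_cancel₀ (ne_of_gt (wgt_pos (hv k))), one_smul]
      rw [hurw, mink_smul_left]
      exact mul_pos (wgt_pos (hv k))
        (lt_of_lt_of_le one_pos (one_le_mink_nlift (hv k) hc1))
    have hsum1 : mink (nlift x) (nlift c) =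
        ∑ k, B.repr (nlift x) k * mink ((1:ℝ), v k) (nlift c) := by
      nth_rewrite 1 [hXsum]
      rw [mink_sum_left]
      exact Finset.sum_congr rfl fun k _ => by rw [mink_smul_left]
    have hcc : mink (nlift c) (nlift c) =
        ∑ k, B.repr (nlift c) k * mink ((1:ℝ), v k) (nlift c) := by
      nth_rewrite 1 [hCsum]
      rw [mink_sum_left]
      exact Finset.sum_congr rfl fun k _ => by rw [mink_smul_left]
    have hsum2 : ∑ k, B.repr (nlift c) k * mink ((1:ℝ), v k) (nlift c) = 1 :=
      hcc.symm.trans (mink_nlift_self hc1)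
    have hak : ∀ k, B.repr (nlift x) k ≤ K * B.repr (nlift c) k := by
      intro k
      have h1 : B.repr (nlift x) k * mink ((1:ℝ), v k) (eh k) ≤ Real.sinh (r + 1) := by
        rw [← hcoordx k]; exact hxcoord k
      have h2 : Real.sinh δ ≤ B.repr (nlift c) k * mink ((1:ℝ), v k) (eh k) := by
        rw [← hcoordc k]; exact hγ k
      have h3 : Real.sinh (r + 1) = K * Real.sinh δ := by
        rw [hK]; field_simp
      have h4 : B.repr (nlift x) k * mink ((1:ℝ), v k) (eh k) ≤
          (K * B.repr (nlift c) k) * mink ((1:ℝ), v k) (eh k) := by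
        calc B.repr (nlift x) k * mink ((1:ℝ), v k) (eh k) ≤ Real.sinh (r + 1) := h1
          _ = K * Real.sinh δ := h3
          _ ≤ K * (B.repr (nlift c) k * mink ((1:ℝ), v k) (eh k)) :=
              mul_le_mul_of_nonneg_left h2 (le_of_lt hKpos)
          _ = (K * B.repr (nlift c) k) * mink ((1:ℝ), v k) (eh k) := by ring
      exact le_of_mul_le_mul_right h4 (heh3 k)
    have hfinal : mink (nlift x) (nlift c) ≤ K := by
      rw [hsum1]
      calc ∑ k, B.repr (nlift x) k * mink ((1:ℝ), v k) (nlift c)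
          ≤ ∑ k, (K * B.repr (nlift c) k) * mink ((1:ℝ), v k) (nlift c) :=
            Finset.sum_le_sum fun k _ =>
              mul_le_mul_of_nonneg_right (hak k) (le_of_lt (hP k))
        _ = K * ∑ k, B.repr (nlift c) k * mink ((1:ℝ), v k) (nlift c) := by
            rw [Finset.mul_sum]
            exact Finset.sum_congr rfl fun k _ => by ring
        _ = K * 1 := by rw [hsum2]
        _ = K := mul_one K
    have hq1 : 1 ≤ mink (nlift x) (nlift c) := one_le_mink_nlift hx1 hc1
    rw [hdist_eq x c hx1]
    calc arcosh (mink (nlift x) (nlift c)) ≤ arcosh K := arcosh_le_arcosh hq1 hfinal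
      _ ≤ max (arcosh K) 0 := le_max_left _ _
      _ ≤ max (arcosh K) 0 + 1 := by linarith
end
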